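/- arXiv:1908.03954 — 7 statements merged into one kernel-verified Lean document; each statement's English description precedes it below -/
import Mathlib

section
/- If X is a set of mutually co-duplicate vertices in a simple graph G (every two distinct vertices in X are adjacent and their neighborhoods agree outside the pair), then the multiplicity of the eigenvalue -1 of A(G) is at least |X| - 1. -/
open scoped Classical

noncomputable section

/-- Threshold graph built from a binary string `b` (indexed by `Fin n`, first bit should be 0):
vertex `j` is joined to all earlier vertices iff `b j = true`. -/
def thresholdGraph {n : ℕ} (b : Fin n → Bool) : SimpleGraph (Fin n) where
  Adj i j := (i < j ∧ b j = true) ∨ (j < i ∧ b i = true)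
  symm := ⟨by intro i j h; tauto⟩
  loopless := ⟨by intro i h; rcases h with ⟨h, -⟩ | ⟨h, -⟩ <;> exact absurd h (lt_irrefl i)⟩

/-- Threshold graph of a binary string given as a list. -/
def thresholdGraphL (b : List Bool) : SimpleGraph (Fin b.length) :=
  thresholdGraph (fun i => b.get i)

/-- The binary string `0^{s_1}1^{t_1} ⋯ 0^{s_k}1^{t_k}`. -/
def runList {k : ℕ} (s t : Fin k → ℕ) : List Bool :=
  (List.ofFn fun i => List.replicate (s i) false ++ List.replicate (t i) true).flatten

/-- The connected anti-regular graph on `m` vertices, i.e. the threshold graph with the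
alternating string `0101⋯01` (`m` even) or `00101⋯01` (`m` odd). -/
def antiRegular (m : ℕ) : SimpleGraph (Fin m) :=
  thresholdGraph (fun i =>
    if m % 2 = 0 then decide ((i : ℕ) % 2 = 1)
    else decide (2 ≤ (i : ℕ) ∧ (i : ℕ) % 2 = 0))

/-- The (0,1)-adjacency matrix of a graph, over `ℝ`. -/
def adjMat {V : Type} [Fintype V] [DecidableEq V] (G : SimpleGraph V) : Matrix V V ℝ :=
  Matrix.of fun i j => if G.Adj i j then 1 else 0

/-- `μ` is an eigenvalue of the matrix `A`. -/
def IsEigenvalue {V : Type} [Fintype V] [DecidableEq V] (A : Matrix V V ℝ) (μ : ℝ) : Prop :=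
  ∃ x : V → ℝ, x ≠ 0 ∧ A.mulVec x = μ • x

/-- The (geometric) multiplicity of `μ` as an eigenvalue of `A`. -/
def eigMult {V : Type} [Fintype V] [DecidableEq V] (A : Matrix V V ℝ) (μ : ℝ) : ℕ :=
  Module.finrank ℝ (LinearMap.ker (A.mulVecLin - μ • LinearMap.id))

/-- `μ = μ⁻(A)`: the largest eigenvalue of `A` that is strictly less than `-1`. -/
def IsMuMinus {V : Type} [Fintype V] [DecidableEq V] (A : Matrix V V ℝ) (μ : ℝ) : Prop :=
  IsEigenvalue A μ ∧ μ < -1 ∧ ∀ x, IsEigenvalue A x → x < -1 → x ≤ μ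

/-- `μ = μ⁺(A)`: the smallest strictly positive eigenvalue of `A`. -/
def IsMuPlus {V : Type} [Fintype V] [DecidableEq V] (A : Matrix V V ℝ) (μ : ℝ) : Prop :=
  IsEigenvalue A μ ∧ 0 < μ ∧ ∀ x, IsEigenvalue A x → 0 < x → μ ≤ x

/-- `μ = λ_max(A)`: the largest eigenvalue of `A`. -/
def IsMaxEig {V : Type} [Fintype V] [DecidableEq V] (A : Matrix V V ℝ) (μ : ℝ) : Prop :=
  IsEigenvalue A μ ∧ ∀ x, IsEigenvalue A x → x ≤ μ

/-- `μ = λ_min(A)`: the smallest eigenvalue of `A`. -/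
def IsMinEig {V : Type} [Fintype V] [DecidableEq V] (A : Matrix V V ℝ) (μ : ℝ) : Prop :=
  IsEigenvalue A μ ∧ ∀ x, IsEigenvalue A x → μ ≤ x

/-- a set `X` of mutually co-duplicate vertices forces the eigenvalue `-1` to have
multiplicity at least `|X| - 1`. -/
theorem mutually_coduplicate_negone_multiplicity {V : Type} [Fintype V] [DecidableEq V]
    (G : SimpleGraph V) (X : Finset V)
    (h : ∀ i ∈ X, ∀ j ∈ X, i ≠ j →
      G.Adj i j ∧ ∀ u, u ≠ i → u ≠ j → (G.Adj i u ↔ G.Adj j u)) :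
    X.card - 1 ≤ eigMult (adjMat G) (-1) := by
  classical
  by_cases hX : X.card ≤ 1
  · simp [Nat.sub_eq_zero_of_le hX]
  push_neg at hX
  obtain ⟨i0, hi0⟩ := Finset.card_pos.mp (by omega : 0 < X.card)
  set S := X.erase i0 with hS
  have hScard : S.card = X.card - 1 := Finset.card_erase_of_mem hi0
  set K := LinearMap.ker ((adjMat G).mulVecLin - (-1 : ℝ) • LinearMap.id) with hK
  have hmem : ∀ j ∈ S, (Pi.single i0 1 - Pi.single j 1 : V → ℝ) ∈ K := by
    intro j hj
    have hji0 : j ≠ i0 := Finset.ne_of_mem_erase hj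
    have hjX : j ∈ X := Finset.mem_of_mem_erase hj
    obtain ⟨hadj, hdup⟩ := h i0 hi0 j hjX (Ne.symm hji0)
    rw [hK, LinearMap.mem_ker]
    ext u
    simp only [LinearMap.sub_apply, LinearMap.smul_apply, LinearMap.id_apply,
      Matrix.mulVecLin_apply, Pi.sub_apply, Pi.smul_apply, smul_eq_mul, Pi.zero_apply]
    have hmv : (adjMat G).mulVec (Pi.single i0 1 - Pi.single j 1 : V → ℝ) u
        = adjMat G u i0 - adjMat G u j := by
      rw [Matrix.mulVec_sub]
      simp [Matrix.mulVec_single]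
    rw [hmv]
    rcases eq_or_ne u i0 with rfl | hui0
    · have h1 : adjMat G u u = 0 := by simp [adjMat]
      have h2 : adjMat G u j = 1 := by simp [adjMat, hadj]
      simp [h1, h2, Pi.single_apply, Ne.symm hji0]
    · rcases eq_or_ne u j with rfl | huj
      · have h1 : adjMat G u u = 0 := by simp [adjMat]
        have h2 : adjMat G u i0 = 1 := by simp [adjMat, (G.adj_symm hadj)]
        simp [h1, h2, Pi.single_apply, hji0]
      · have heq : adjMat G u i0 = adjMat G u j := by
          have hiff := hdup u hui0 huj
          simp only [adjMat, Matrix.of_apply]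
          rw [G.adj_comm u i0, G.adj_comm u j]
          simp [hiff]
        simp [heq, Pi.single_apply, hui0, huj]
  let f : S → K := fun j => ⟨Pi.single i0 1 - Pi.single (j : V) 1, hmem j j.2⟩
  have hli : LinearIndependent ℝ f := by
    rw [Fintype.linearIndependent_iff]
    intro g hg j
    have hg0 : (∑ i : S, g i • (Pi.single i0 1 - Pi.single (i : V) 1 : V → ℝ)) = 0 := by
      have := congrArg Subtype.val hg
      simpa [f] using this
    have hji0 : (j : V) ≠ i0 := Finset.ne_of_mem_erase j.2
    have key : ∑ i : S, g i • ((Pi.single i0 1 - Pi.single (i : V) 1 : V → ℝ) (j : V))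
        = -g j := by
      rw [Finset.sum_eq_single j]
      · simp [Pi.single_apply, hji0]
      · intro i _ hij
        have hne : (j : V) ≠ (i : V) := fun hc => hij (Subtype.ext hc.symm)
        simp [Pi.single_apply, hji0, hne]
      · intro hj; exact absurd (Finset.mem_univ j) hj
    have hval := congrFun hg0 (j : V)
    rw [Finset.sum_apply] at hval
    simp only [Pi.smul_apply, Pi.zero_apply] at hval
    rw [key] at hval
    linarith
  have hcard := hli.fintype_card_le_finrank
  rw [Fintype.card_coe, hScard] at hcard
  exact hcard
end
end

section
/- Every connected threshold graph on n ≥ 2 vertices is isomorphic to an induced subgraph of the anti-regular graph A_{2n-2}. -/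
open scoped Classical

noncomputable section

/-- every connected threshold graph on `n ≥ 2` vertices is an induced subgraph
of the anti-regular graph `A_{2n-2}`. -/
theorem threshold_embeds_in_antiregular {n : ℕ} (hn : 2 ≤ n) (b : Fin n → Bool)
    (h0 : b ⟨0, by omega⟩ = false) (hconn : (thresholdGraph b).Connected) :
    Nonempty (thresholdGraph b ↪g antiRegular (2 * n - 2)) := by
  -- The last bit must be true, otherwise the last vertex is isolated.
  have hlast : b ⟨n - 1, by omega⟩ = true := by
    by_contra hb
    have hiso : ∀ x, ¬ (thresholdGraph b).Adj ⟨n - 1, by omega⟩ x := by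
      intro x hx
      rcases hx with ⟨hlt, -⟩ | ⟨-, hbv⟩
      · have hx2 := x.isLt
        rw [Fin.lt_def] at hlt
        simp only at hlt
        omega
      · exact hb hbv
    obtain ⟨w⟩ := hconn.preconnected ⟨n - 1, by omega⟩ ⟨0, by omega⟩
    have hne : (⟨n - 1, by omega⟩ : Fin n) ≠ ⟨0, by omega⟩ := by
      simp only [ne_eq, Fin.mk.injEq]
      omega
    exact hiso _ (SimpleGraph.Walk.adj_snd (p := w) (SimpleGraph.Walk.not_nil_of_ne (p := w) hne))
  have hbpos : ∀ j : Fin n, b j = true → 1 ≤ (j : ℕ) := by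
    intro j hj
    by_contra h
    have hj0 : j = ⟨0, by omega⟩ := by
      apply Fin.ext
      show (j : ℕ) = 0
      omega
    rw [hj0, h0] at hj
    exact Bool.noConfusion hj
  have hbtop : ∀ j : Fin n, b j = false → (j : ℕ) < n - 1 := by
    intro j hj
    by_contra h
    have hjl : j = ⟨n - 1, by omega⟩ := by
      apply Fin.ext
      show (j : ℕ) = n - 1
      have := j.isLt
      omega
    rw [hjl, hlast] at hj
    exact Bool.noConfusion hj
  set fv : Fin n → ℕ := fun j => if b j then 2 * (j : ℕ) - 1 else 2 * (j : ℕ) with hfvdef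
  have hfv : ∀ j, fv j < 2 * n - 2 := by
    intro j
    have hjl := j.isLt
    simp only [hfvdef]
    split_ifs with h
    · omega
    · have := hbtop j (by simpa using h)
      omega
  have hpar : ∀ j : Fin n, (fv j % 2 = 1) ↔ b j = true := by
    intro j
    simp only [hfvdef]
    split_ifs with h
    · have := hbpos j h
      constructor
      · intro _; exact h
      · intro _; omega
    · constructor
      · intro hc; omega
      · intro hc; exact absurd hc h
  have hmono : ∀ i j : Fin n, i < j → fv i < fv j := by
    intro i j h
    rw [Fin.lt_def] at h
    simp only [hfvdef]
    split_ifs <;> omega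
  have hiff : ∀ i j : Fin n, fv i < fv j ↔ i < j := by
    intro i j
    constructor
    · intro h
      by_contra hc
      rcases lt_trichotomy i j with h1 | h1 | h1
      · exact hc h1
      · rw [h1] at h; exact lt_irrefl _ h
      · exact absurd h (not_lt.mpr (le_of_lt (hmono j i h1)))
    · exact hmono i j
  have h2 : (2 * n - 2) % 2 = 0 := by omega
  have hA : ∀ x y : Fin (2 * n - 2), (antiRegular (2 * n - 2)).Adj x y ↔
      (((x : ℕ) < y ∧ (y : ℕ) % 2 = 1) ∨ ((y : ℕ) < x ∧ (x : ℕ) % 2 = 1)) := by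
    intro x y
    simp only [antiRegular, thresholdGraph, if_pos h2, decide_eq_true_iff, Fin.lt_def]
  refine ⟨⟨⟨fun j => ⟨fv j, hfv j⟩, ?_⟩, ?_⟩⟩
  · intro i j hij
    simp only [Fin.mk.injEq] at hij
    by_contra hne
    rcases lt_trichotomy i j with h1 | h1 | h1
    · exact absurd hij (Nat.ne_of_lt (hmono i j h1))
    · exact hne h1
    · exact absurd hij.symm (Nat.ne_of_lt (hmono j i h1))
  · intro a c
    show (antiRegular (2 * n - 2)).Adj ⟨fv a, hfv a⟩ ⟨fv c, hfv c⟩ ↔ _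
    rw [hA]
    show _ ↔ (a < c ∧ b c = true) ∨ (c < a ∧ b a = true)
    simp only [hpar, hiff]
end
end

section
/- Let G be a connected threshold graph with binary string b = 0^{s_1} 1^{t_1} ... 0^{s_k} 1^{t_k} on n = Σ(s_i + t_i) vertices. Let N = 2(n-k) if s_1 = 1 and N = 2(n-k) - 1 if s_1 ≥ 2. Then G is isomorphic to an induced subgraph of the anti-regular graph A_N. -/
open scoped Classical
open List

noncomputable section

/-- The alternating string `(01)^m`. -/
def altPairs (m : ℕ) : List Bool := (List.replicate m [false, true]).flatten

lemma altPairs_succ (m : ℕ) : altPairs (m+1) = false :: true :: altPairs m := rfl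

lemma altPairs_add (a b : ℕ) : altPairs (a + b) = altPairs a ++ altPairs b := by
  unfold altPairs
  rw [List.replicate_add, List.flatten_append]

lemma altPairs_length (m : ℕ) : (altPairs m).length = 2 * m := by
  induction m with
  | zero => rfl
  | succ m ih => rw [altPairs_succ]; simp [ih]; omega

lemma altPairs_getElem (m i : ℕ) (h : i < (altPairs m).length) :
    (altPairs m)[i] = decide (i % 2 = 1) := by
  induction m generalizing i with
  | zero => simp [altPairs] at h
  | succ m ih =>
    rw [altPairs_succ] at h
    have hshow : altPairs (m+1) = false :: true :: altPairs m := altPairs_succ m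
    match i, h with
    | 0, h => simp [hshow]
    | 1, h => simp [hshow]
    | (j+2), h =>
      simp only [hshow, List.getElem_cons_succ]
      rw [ih j (by
        have h2 := altPairs_length m
        have h3 := altPairs_length (m+1)
        have h4 : (false :: true :: altPairs m).length = 2*m+2 := by
          simp [altPairs_length]
        omega)]
      simp only [decide_eq_decide]
      omega

lemma replicate_sublist_altPairs (x : Bool) (m : ℕ) :
    List.replicate m x <+ altPairs m := by
  induction m with
  | zero => simp
  | succ m ih =>
    rw [altPairs_succ, List.replicate_succ]
    cases x
    · exact (ih.cons _).cons₂ _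
    · exact ((ih.cons₂ _).cons _)

lemma block_sublist (s t : ℕ) (hs : 1 ≤ s) (ht : 1 ≤ t) :
    List.replicate s false ++ List.replicate t true <+ altPairs (s + t - 1) := by
  obtain ⟨s', rfl⟩ : ∃ s', s = s' + 1 := ⟨s - 1, by omega⟩
  obtain ⟨t', rfl⟩ : ∃ t', t = t' + 1 := ⟨t - 1, by omega⟩
  have h1 : s' + 1 + (t' + 1) - 1 = s' + (t' + 1) := by omega
  rw [h1, altPairs_add, altPairs_succ, List.replicate_succ', List.replicate_succ,
    List.append_assoc]
  refine List.Sublist.append (replicate_sublist_altPairs _ _) ?_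
  exact ((replicate_sublist_altPairs true t').cons₂ _).cons₂ _

lemma thresholdGraph_adj {n : ℕ} (b : Fin n → Bool) (i j : Fin n) :
    (thresholdGraph b).Adj i j ↔ (i < j ∧ b j = true) ∨ (j < i ∧ b i = true) := Iff.rfl

lemma emb_of_sublist (b : List Bool) {N : ℕ} (bf : Fin N → Bool)
    (h : b <+ List.ofFn bf) : Nonempty (thresholdGraphL b ↪g thresholdGraph bf) := by
  obtain ⟨f, hf⟩ := List.sublist_iff_exists_fin_orderEmbedding_get_eq.mp h
  have hget : ∀ x, bf (Fin.cast (List.length_ofFn (f := bf)) (f x)) = b.get x := by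
    intro x; rw [hf x, List.get_ofFn]
  have hlt : ∀ x y : Fin b.length,
      (Fin.cast (List.length_ofFn (f := bf)) (f x) < Fin.cast (List.length_ofFn (f := bf)) (f y)) ↔ x < y := by
    intro x y
    rw [Fin.lt_def, Fin.coe_cast, Fin.coe_cast, ← Fin.lt_def, f.lt_iff_lt]
  refine ⟨⟨⟨fun j => Fin.cast (List.length_ofFn (f := bf)) (f j), ?_⟩, ?_⟩⟩
  · intro a b hab
    apply f.injective
    apply Fin.ext
    have := congrArg Fin.val hab
    simpa using this
  · intro a b
    simp only [Function.Embedding.coeFn_mk, thresholdGraphL, thresholdGraph_adj]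
    change (Fin.cast (List.length_ofFn (f := bf)) (f a) < Fin.cast (List.length_ofFn (f := bf)) (f b) ∧ bf (Fin.cast (List.length_ofFn (f := bf)) (f b)) = true ∨
      Fin.cast (List.length_ofFn (f := bf)) (f b) < Fin.cast (List.length_ofFn (f := bf)) (f a) ∧ bf (Fin.cast (List.length_ofFn (f := bf)) (f a)) = true) ↔ _
    rw [hget, hget, hlt, hlt]

lemma runList_sublist : ∀ (k : ℕ) (s t : Fin k → ℕ), (∀ i, 1 ≤ s i) → (∀ i, 1 ≤ t i) →
    runList s t <+ altPairs (∑ i, (s i + t i - 1)) := by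
  intro k
  induction k with
  | zero => intro s t _ _; simp [runList, altPairs]
  | succ k ih =>
    intro s t hs ht
    rw [Fin.sum_univ_succ, altPairs_add]
    have hre : runList s t = (List.replicate (s 0) false ++ List.replicate (t 0) true)
        ++ runList (fun i => s i.succ) (fun i => t i.succ) := by
      simp [runList, List.ofFn_succ]
    rw [hre]
    exact (block_sublist _ _ (hs 0) (ht 0)).append
      (ih _ _ (fun i => hs i.succ) (fun i => ht i.succ))

/-- a connected threshold graph with string `0^{s_1}1^{t_1}⋯0^{s_k}1^{t_k}` on
`n` vertices is an induced subgraph of `A_N`, with `N = 2(n-k)` if `s_1 = 1` and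
`N = 2(n-k) - 1` if `s_1 ≥ 2`. -/
theorem smallest_antiregular_supergraph {k : ℕ} (hk : 0 < k) (s t : Fin k → ℕ)
    (hs : ∀ i, 1 ≤ s i) (ht : ∀ i, 1 ≤ t i)
    (n : ℕ) (hn : n = ∑ i, (s i + t i))
    (N : ℕ) (hN : N = if s ⟨0, hk⟩ = 1 then 2 * (n - k) else 2 * (n - k) - 1) :
    Nonempty (thresholdGraphL (runList s t) ↪g antiRegular N) := by
  have hsum0 : ∑ i, (s i + t i - 1) + k = ∑ i, (s i + t i) := by
    have h1 : ∑ i, (s i + t i - 1) + ∑ _i : Fin k, 1 = ∑ i, (s i + t i) := by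
      rw [← Finset.sum_add_distrib]
      exact Finset.sum_congr rfl fun i _ => by have := hs i; have := ht i; omega
    simpa using h1
  have hge : 2 * k ≤ ∑ i, (s i + t i) := by
    calc 2 * k = ∑ _i : Fin k, 2 := by simp [mul_comm]
    _ ≤ ∑ i, (s i + t i) := Finset.sum_le_sum fun i _ => by have := hs i; have := ht i; omega
  have hsum : ∑ i, (s i + t i - 1) = n - k := by omega
  have hnk : 1 ≤ n - k := by omega
  set bf : Fin N → Bool := fun i =>
    if N % 2 = 0 then decide ((i : ℕ) % 2 = 1)
    else decide (2 ≤ (i : ℕ) ∧ (i : ℕ) % 2 = 0) with hbf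
  have main : runList s t <+ List.ofFn bf := by
    by_cases hcase : s ⟨0, hk⟩ = 1
    · -- even case
      rw [if_pos hcase] at hN
      have hceq : List.ofFn bf = altPairs (n - k) := by
        apply List.ext_getElem
        · simp [altPairs_length]; omega
        · intro i h1 h2
          simp only [List.getElem_ofFn, hbf]
          rw [altPairs_getElem _ _ h2]
          have hNmod : N % 2 = 0 := by omega
          simp [hNmod]
      rw [hceq, ← hsum]
      exact runList_sublist k s t hs ht
    · -- odd case
      rw [if_neg hcase] at hN
      have hs0 : 2 ≤ s ⟨0, hk⟩ := by have := hs ⟨0, hk⟩; omega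
      obtain ⟨k', rfl⟩ : ∃ k', k = k' + 1 := ⟨k - 1, by omega⟩
      have hNodd : N % 2 = 1 := by omega
      have hceq : List.ofFn bf = false :: altPairs (n - (k' + 1) - 1) := by
        apply List.ext_getElem
        · simp [altPairs_length]; omega
        · intro i h1 h2
          simp only [List.getElem_ofFn, hbf, if_neg (by omega : ¬ N % 2 = 0)]
          match i, h2 with
          | 0, h2 => simp
          | (j+1), h2 =>
            simp only [List.getElem_cons_succ]
            rw [altPairs_getElem _ _ (by simpa using h2)]
            rw [decide_eq_decide]
            omega
      set s' : Fin (k' + 1) → ℕ := Function.update s 0 (s 0 - 1) with hs'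
      have hs'succ : ∀ i : Fin k', s' i.succ = s i.succ := by
        intro i
        rw [hs']
        exact Function.update_of_ne (Fin.succ_ne_zero i) _ _
      have hs'0 : s' 0 = s 0 - 1 := Function.update_self _ _ _
      have hs0' : s ⟨0, hk⟩ = s 0 := rfl
      have hrl : runList s t = false :: runList s' t := by
        obtain ⟨m, hm⟩ : ∃ m, s 0 = m + 1 := ⟨s 0 - 1, by rw [← hs0']; omega⟩
        simp only [runList, List.ofFn_succ, List.flatten_cons]
        rw [hs'0, hm]
        simp only [Nat.add_sub_cancel, List.replicate_succ, hs'succ]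
        simp
      have hsub' : runList s' t <+ altPairs (n - (k' + 1) - 1) := by
        have h1 : ∀ i, 1 ≤ s' i := by
          intro i
          rcases eq_or_ne i 0 with rfl | hne
          · rw [hs'0, ← hs0']; omega
          · rw [hs', Function.update_of_ne hne]; exact hs i
        have h2 : ∑ i, (s' i + t i - 1) = n - (k' + 1) - 1 := by
          have : ∑ i, (s' i + t i - 1) + 1 = ∑ i, (s i + t i - 1) := by
            rw [Fin.sum_univ_succ, Fin.sum_univ_succ (f := fun i => s i + t i - 1)]
            have e1 : s' 0 + t 0 - 1 + 1 = s 0 + t 0 - 1 := by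
              rw [hs'0]; have := ht 0; rw [← hs0']; omega
            have e2 : ∀ i : Fin k', s' i.succ + t i.succ - 1 = s i.succ + t i.succ - 1 := by
              intro i; rw [hs'succ]
            rw [Finset.sum_congr rfl fun i _ => e2 i]
            omega
          omega
        rw [← h2]
        exact runList_sublist _ s' t h1 ht
      rw [hceq, hrl]
      exact hsub'.cons₂ _
  exact emb_of_sublist _ bf main
end
end

section
/- Let G be a connected threshold graph with binary string b = 0^{s_1} 1^{t_1} ... 0^{s_k} 1^{t_k}. If s_1 = 1, then the anti-regular graph A_{2k} is isomorphic to an induced subgraph of G; if s_1 ≥ 2, then A_{2k+1} is isomorphic to an induced subgraph of G. -/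
open scoped Classical

noncomputable section

namespace LAR

def blk (a b : ℕ) : List Bool := List.replicate a false ++ List.replicate b true
def runN (s t : ℕ → ℕ) (k : ℕ) : List Bool :=
  ((List.range k).map fun i => blk (s i) (t i)).flatten
def off (s t : ℕ → ℕ) (i : ℕ) : ℕ := ∑ j ∈ Finset.range i, (s j + t j)

lemma off_succ (s t : ℕ → ℕ) (i : ℕ) : off s t (i+1) = off s t i + (s i + t i) :=
  Finset.sum_range_succ _ _

lemma runN_succ (s t : ℕ → ℕ) (k : ℕ) :
    runN s t (k+1) = runN s t k ++ blk (s k) (t k) := by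
  simp [runN, List.range_succ]

lemma length_runN (s t : ℕ → ℕ) (k : ℕ) : (runN s t k).length = off s t k := by
  induction k with
  | zero => rfl
  | succ k ih => simp [runN_succ, off_succ, ih, blk]

lemma prefix_runN (s t : ℕ → ℕ) : ∀ {i k : ℕ}, i ≤ k → runN s t i <+: runN s t k := by
  intro i k h
  induction k with
  | zero => obtain rfl : i = 0 := Nat.le_zero.mp h; exact List.prefix_rfl
  | succ k ih =>
    rcases Nat.lt_or_ge i (k+1) with h' | h'
    · exact (ih (Nat.lt_succ_iff.mp h')).trans (by rw [runN_succ]; exact List.prefix_append _ _)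
    · obtain rfl : i = k + 1 := le_antisymm h h'
      exact List.prefix_rfl

lemma getElem_blk {a b r : ℕ} (h : r < (blk a b).length) : (blk a b)[r] = decide (a ≤ r) := by
  unfold blk at *
  rcases Nat.lt_or_ge r a with h' | h'
  · rw [List.getElem_append_left (by simpa using h')]
    simp [Nat.not_le.mpr h']
  · rw [List.getElem_append_right (by simpa using h')]
    simp [h']

lemma getElem_runN (s t : ℕ → ℕ) {k i r : ℕ} (hik : i < k) (hr : r < s i + t i)
    (h : off s t i + r < (runN s t k).length) :
    (runN s t k)[off s t i + r] = decide (s i ≤ r) := by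
  have hpre := prefix_runN s t (show i + 1 ≤ k from hik)
  have hlen : off s t i + r < (runN s t (i+1)).length := by
    rw [length_runN, off_succ]; omega
  rw [← List.IsPrefix.getElem hpre hlen]
  rw [List.getElem_of_eq (runN_succ s t i)]
  rw [List.getElem_append_right (by rw [length_runN]; omega)]
  have : off s t i + r - (runN s t i).length = r := by rw [length_runN]; omega
  simp only [this]
  exact getElem_blk _

lemma runList_eq {k : ℕ} (s t : Fin k → ℕ) :
    runList s t = runN (fun j => if h : j < k then s ⟨j, h⟩ else 1)
                       (fun j => if h : j < k then t ⟨j, h⟩ else 1) k := by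
  unfold runList runN
  congr 1
  apply List.ext_getElem
  · simp
  · intro i h1 h2
    simp only [List.length_ofFn] at h1
    rw [List.getElem_ofFn, List.getElem_map, List.getElem_range]
    simp [blk, h1]

lemma le_off (s t : ℕ → ℕ) (hs : ∀ j, 1 ≤ s j) (ht : ∀ j, 1 ≤ t j) (i : ℕ) :
    2 * i ≤ off s t i := by
  induction i with
  | zero => simp [off]
  | succ i ih => have := hs i; have := ht i; rw [off_succ]; omega

def posE (s t : ℕ → ℕ) (p : ℕ) : ℕ :=
  off s t (p/2) + if p % 2 = 1 then s (p/2) + t (p/2) - 1 else 0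

def posO (s t : ℕ → ℕ) (p : ℕ) : ℕ :=
  if p < 2 then p else off s t (p/2) + p % 2 - 1

lemma posE_strictMono (s t : ℕ → ℕ) (hs : ∀ j, 1 ≤ s j) (ht : ∀ j, 1 ≤ t j) :
    StrictMono (posE s t) := by
  apply strictMono_nat_of_lt_succ
  intro p
  rcases Nat.even_or_odd p with ⟨j, rfl⟩ | ⟨j, rfl⟩
  · have h1 : (j + j) / 2 = j := by omega
    have h2 : (j + j + 1) / 2 = j := by omega
    have h3 : ¬ (j + j) % 2 = 1 := by omega
    have h4 : (j + j + 1) % 2 = 1 := by omega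
    have := hs j; have := ht j
    simp only [posE, h1, h2, if_neg h3, if_pos h4]
    omega
  · have h1 : (2 * j + 1) / 2 = j := by omega
    have h2 : (2 * j + 1 + 1) / 2 = j + 1 := by omega
    have h3 : (2 * j + 1) % 2 = 1 := by omega
    have h4 : ¬ (2 * j + 1 + 1) % 2 = 1 := by omega
    have := hs j; have := ht j
    simp only [posE, h1, h2, if_pos h3, if_neg h4, off_succ]
    omega

lemma posO_strictMono (s t : ℕ → ℕ) (hs : ∀ j, 1 ≤ s j) (ht : ∀ j, 1 ≤ t j)
    (hs0 : 2 ≤ s 0) : StrictMono (posO s t) := by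
  apply strictMono_nat_of_lt_succ
  intro p
  match p with
  | 0 => simp [posO]
  | 1 =>
    have h1 : off s t 1 = s 0 + t 0 := by
      rw [show (1:ℕ) = 0 + 1 from rfl, off_succ]; simp [off]
    have := ht 0
    simp only [posO]
    norm_num
    omega
  | (p+2) =>
    have hnlt : ¬ (p + 2 < 2) := by omega
    have hnlt' : ¬ (p + 3 < 2) := by omega
    rcases Nat.even_or_odd p with ⟨j, rfl⟩ | ⟨j, rfl⟩
    · have h1 : (j + j + 2) / 2 = j + 1 := by omega
      have h2 : (j + j + 2 + 1) / 2 = j + 1 := by omega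
      have h3 : (j + j + 2) % 2 = 0 := by omega
      have h4 : (j + j + 2 + 1) % 2 = 1 := by omega
      have h5 := le_off s t hs ht (j + 1)
      simp only [posO, if_neg hnlt, if_neg (show ¬ (j + j + 2 + 1 < 2) by omega), h1, h2, h3, h4]
      omega
    · have h1 : (2 * j + 1 + 2) / 2 = j + 1 := by omega
      have h2 : (2 * j + 1 + 2 + 1) / 2 = j + 2 := by omega
      have h3 : (2 * j + 1 + 2) % 2 = 1 := by omega
      have h4 : (2 * j + 1 + 2 + 1) % 2 = 0 := by omega
      have := hs (j+1); have := ht (j+1)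
      simp only [posO, if_neg (show ¬ (2 * j + 1 + 2 < 2) by omega),
        if_neg (show ¬ (2 * j + 1 + 2 + 1 < 2) by omega), h1, h2, h3, h4, off_succ]
      omega

def thresholdGraph_embed {m n : ℕ} (b' : Fin m → Bool) (b : Fin n → Bool)
    (f : Fin m → Fin n) (hf : StrictMono f) (hb : ∀ i, b (f i) = b' i) :
    thresholdGraph b' ↪g thresholdGraph b :=
  ⟨⟨f, hf.injective⟩, by
    intro i j
    show ((f i < f j ∧ b (f j) = true) ∨ (f j < f i ∧ b (f i) = true)) ↔
      ((i < j ∧ b' j = true) ∨ (j < i ∧ b' i = true))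
    rw [hb i, hb j, hf.lt_iff_lt, hf.lt_iff_lt]⟩

end LAR

/-- the largest anti-regular induced subgraph of a connected threshold graph
with string `0^{s_1}1^{t_1}⋯0^{s_k}1^{t_k}` is `A_{2k}` if `s_1 = 1` and `A_{2k+1}`
if `s_1 ≥ 2`. -/
theorem largest_antiregular_subgraph {k : ℕ} (hk : 0 < k) (s t : Fin k → ℕ)
    (hs : ∀ i, 1 ≤ s i) (ht : ∀ i, 1 ≤ t i) :
    (s ⟨0, hk⟩ = 1 → Nonempty (antiRegular (2 * k) ↪g thresholdGraphL (runList s t))) ∧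
    (2 ≤ s ⟨0, hk⟩ → Nonempty (antiRegular (2 * k + 1) ↪g thresholdGraphL (runList s t))) := by
  classical
  set s' : ℕ → ℕ := fun j => if h : j < k then s ⟨j, h⟩ else 1 with hs'
  set t' : ℕ → ℕ := fun j => if h : j < k then t ⟨j, h⟩ else 1 with ht'
  have hs1 : ∀ j, 1 ≤ s' j := by
    intro j; rw [hs']; dsimp only; split
    · exact hs _
    · exact le_rfl
  have ht1 : ∀ j, 1 ≤ t' j := by
    intro j; rw [ht']; dsimp only; split
    · exact ht _
    · exact le_rfl
  have hrun : runList s t = LAR.runN s' t' k := LAR.runList_eq s t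
  have hlen : (runList s t).length = LAR.off s' t' k := by rw [hrun, LAR.length_runN]
  constructor
  · -- even case
    intro _
    have hb : ∀ p : Fin (2 * k), LAR.posE s' t' (p : ℕ) < (runList s t).length := by
      intro p
      rw [hlen]
      have h1 := (LAR.posE_strictMono s' t' hs1 ht1) p.isLt
      have h2 : LAR.posE s' t' (2 * k) = LAR.off s' t' k := by
        have e1 : 2 * k / 2 = k := by omega
        have e2 : ¬ (2 * k) % 2 = 1 := by omega
        simp [LAR.posE, e1, e2]
      omega
    refine ⟨LAR.thresholdGraph_embed _ _ (fun p => ⟨LAR.posE s' t' (p : ℕ), hb p⟩) ?_ ?_⟩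
    · intro a b hab
      exact Fin.mk_lt_mk.mpr ((LAR.posE_strictMono s' t' hs1 ht1) (Fin.lt_def.mp hab))
    · intro p
      have hpk : (p : ℕ) < 2 * k := p.isLt
      have hjk : (p : ℕ) / 2 < k := by omega
      have hsj := hs1 ((p : ℕ) / 2); have htj := ht1 ((p : ℕ) / 2)
      have hr : (if (p : ℕ) % 2 = 1 then s' ((p : ℕ)/2) + t' ((p : ℕ)/2) - 1 else 0)
          < s' ((p : ℕ)/2) + t' ((p : ℕ)/2) := by split <;> omega
      rw [List.get_eq_getElem, List.getElem_of_eq hrun]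
      simp only [LAR.posE]
      rw [LAR.getElem_runN s' t' hjk hr]
      have hm : (2 * k) % 2 = 0 := by omega
      simp only [hm, if_pos]
      rw [decide_eq_decide]
      split <;> omega
  · -- odd case
    intro hS2
    have hs'0 : 2 ≤ s' 0 := by rw [hs']; dsimp only; rw [dif_pos hk]; exact hS2
    have hmono := LAR.posO_strictMono s' t' hs1 ht1 hs'0
    have hb : ∀ p : Fin (2 * k + 1), LAR.posO s' t' (p : ℕ) < (runList s t).length := by
      intro p
      rw [hlen]
      have h1 := hmono p.isLt
      have h2 : LAR.posO s' t' (2 * k + 1) = LAR.off s' t' k := by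
        have e0 : ¬ (2 * k + 1 < 2) := by omega
        have e1 : (2 * k + 1) / 2 = k := by omega
        have e2 : (2 * k + 1) % 2 = 1 := by omega
        simp [LAR.posO, e0, e1, e2]
      omega
    refine ⟨LAR.thresholdGraph_embed _ _ (fun p => ⟨LAR.posO s' t' (p : ℕ), hb p⟩) ?_ ?_⟩
    · intro a b hab
      exact Fin.mk_lt_mk.mpr (hmono (Fin.lt_def.mp hab))
    · intro p
      have hpk : (p : ℕ) < 2 * k + 1 := p.isLt
      have hmodd : ¬ (2 * k + 1) % 2 = 0 := by omega
      rw [List.get_eq_getElem, List.getElem_of_eq hrun]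
      rw [if_neg hmodd]
      by_cases hp2 : (p : ℕ) < 2
      · -- first two vertices, inside block 0
        have hpos : LAR.posO s' t' (p : ℕ) = LAR.off s' t' 0 + (p : ℕ) := by
          simp [LAR.posO, hp2, LAR.off]
        have htj := ht1 0
        simp only [hpos]
        rw [LAR.getElem_runN s' t' hk (by omega)]
        rw [decide_eq_decide]
        omega
      · rcases Nat.even_or_odd (p : ℕ) with hpar | hpar
        · -- p even, p ≥ 2: last true vertex of block p/2 - 1
          obtain ⟨j, hj⟩ := hpar
          have hpar' : (p : ℕ) % 2 = 0 := by omega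
          set i := (p : ℕ) / 2 - 1 with hi
          have hik : i < k := by omega
          have hsucc := LAR.off_succ s' t' i
          have hsi := hs1 i; have hti := ht1 i
          have hii : i + 1 = (p : ℕ) / 2 := by omega
          rw [hii] at hsucc
          have hpos : LAR.posO s' t' (p : ℕ)
              = LAR.off s' t' i + (s' i + t' i - 1) := by
            simp only [LAR.posO, if_neg hp2]
            omega
          simp only [hpos]
          rw [LAR.getElem_runN s' t' hik (by omega)]
          rw [decide_eq_decide]
          omega
        · -- p odd, p ≥ 2: first false vertex of block p/2
          obtain ⟨j, hj⟩ := hpar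
          have hpar' : (p : ℕ) % 2 = 1 := by omega
          have hik : (p : ℕ) / 2 < k := by omega
          have hsi := hs1 ((p : ℕ) / 2)
          have hpos : LAR.posO s' t' (p : ℕ)
              = LAR.off s' t' ((p : ℕ) / 2) + 0 := by
            simp only [LAR.posO, if_neg hp2]
            omega
          simp only [hpos]
          rw [LAR.getElem_runN s' t' hik (by have := ht1 ((p : ℕ)/2); omega)]
          rw [decide_eq_decide]
          omega
end
end

section
/- The anti-regular graph A_n has inertia (k, 0, k) when n = 2k and (k, 1, k) when n = 2k+1; that is, A_{2k} has k negative and k positive adjacency eigenvalues and no zero eigenvalue, while A_{2k+1} has k negative eigenvalues, one zero eigenvalue, and k positive eigenvalues. -/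
open scoped Classical

noncomputable section

section AuxInertia
open Polynomial Matrix Finset

variable {n : ℕ}

lemma euclid_sum_apply {ι : Type*} (s : Finset ι) (f : ι → EuclideanSpace ℝ (Fin n)) (j : Fin n) :
    (∑ i ∈ s, f i : EuclideanSpace ℝ (Fin n)) j = ∑ i ∈ s, f i j := by
  induction s using Finset.cons_induction with
  | empty => rfl
  | cons a s ha ih => rw [Finset.sum_cons, Finset.sum_cons, ← ih]; rfl

lemma euclid_smul_apply (c : ℝ) (v : EuclideanSpace ℝ (Fin n)) (j : Fin n) :
    (c • v : EuclideanSpace ℝ (Fin n)) j = c * v j := rfl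

def quadF (A : Matrix (Fin n) (Fin n) ℝ) (x : Fin n → ℝ) : ℝ := x ⬝ᵥ (A *ᵥ x)

lemma quad_eq_sum {A : Matrix (Fin n) (Fin n) ℝ} (hA : A.IsHermitian)
    (x : EuclideanSpace ℝ (Fin n)) :
    quadF A x = ∑ i, hA.eigenvalues i * (hA.eigenvectorBasis.repr x i)^2 := by
  set b := hA.eigenvectorBasis with hb
  set c : Fin n → ℝ := fun i => b.repr x i with hc
  have hx : ∑ i, c i • b i = x := b.sum_repr x
  have hdot : ∀ i, (x : Fin n → ℝ) ⬝ᵥ (b i : EuclideanSpace ℝ (Fin n)) = c i := by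
    intro i
    have : c i = inner (𝕜 := ℝ) (b i) x := b.repr_apply_apply x i
    rw [this, PiLp.inner_apply]
    simp [dotProduct, mul_comm]
  have hmv : A *ᵥ x = ∑ i, (c i * hA.eigenvalues i) • (b i : EuclideanSpace ℝ (Fin n)) := by
    conv_lhs => rw [← hx]
    have h1 : A *ᵥ (∑ i, c i • b i : EuclideanSpace ℝ (Fin n)) =
        ∑ i, c i • (A *ᵥ (b i : EuclideanSpace ℝ (Fin n))) := by
      simp [WithLp.ofLp_sum, Matrix.mulVec_sum, Matrix.mulVec_smul]
    rw [h1, WithLp.ofLp_sum]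
    refine Finset.sum_congr rfl fun i _ => ?_
    rw [WithLp.ofLp_smul, ← smul_smul]
    exact congrArg (fun v => c i • v) (hA.mulVec_eigenvectorBasis i)
  rw [quadF, hmv, dotProduct]
  simp only [euclid_sum_apply, euclid_smul_apply, Finset.mul_sum]
  rw [Finset.sum_comm]
  refine Finset.sum_congr rfl fun i _ => ?_
  have h2 := hdot i
  rw [dotProduct] at h2
  calc ∑ j, x j * (c i * hA.eigenvalues i * (b i : EuclideanSpace ℝ (Fin n)) j)
      = (c i * hA.eigenvalues i) * ∑ j, x j * (b i : EuclideanSpace ℝ (Fin n)) j := by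
        rw [Finset.mul_sum]; exact Finset.sum_congr rfl fun j _ => by ring
    _ = hA.eigenvalues i * (b.repr x i)^2 := by rw [h2]; ring

lemma span_stuff {A : Matrix (Fin n) (Fin n) ℝ} (hA : A.IsHermitian) (t : Finset (Fin n)) :
    ∃ V : Submodule ℝ (EuclideanSpace ℝ (Fin n)),
      Module.finrank ℝ V = t.card ∧
      ∀ x ∈ V, ∀ i ∉ t, hA.eigenvectorBasis.repr x i = 0 := by
  set b := hA.eigenvectorBasis with hb
  refine ⟨Submodule.span ℝ (b '' ↑t), ?_, ?_⟩
  · have li : LinearIndependent ℝ (fun i : t => (b i : EuclideanSpace ℝ (Fin n))) :=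
      (b.orthonormal.linearIndependent).comp _ Subtype.val_injective
    have hr : Set.range (fun i : t => (b i : EuclideanSpace ℝ (Fin n))) = b '' ↑t := by
      rw [show (fun i : t => (b i : EuclideanSpace ℝ (Fin n))) = b ∘ Subtype.val from rfl,
        Set.range_comp, Subtype.range_coe]
    rw [← hr, finrank_span_eq_card li, Fintype.card_coe]
  · intro x hx i hi
    refine Submodule.span_induction ?_ ?_ ?_ ?_ hx
    · rintro y ⟨j, hj, rfl⟩
      rw [b.repr_self j]
      rw [EuclideanSpace.single_apply]
      simp only [ite_eq_right_iff]
      intro h; exact absurd (h ▸ hj) hi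
    · show b.repr 0 i = 0
      rw [map_zero]; rfl
    · intro y z _ _ hy hz
      rw [map_add]
      show b.repr y i + b.repr z i = 0
      rw [hy, hz, add_zero]
    · intro a y _ hy
      rw [_root_.map_smul]
      show a * b.repr y i = 0
      rw [hy, mul_zero]

lemma repr_ne_zero {A : Matrix (Fin n) (Fin n) ℝ} (hA : A.IsHermitian)
    {x : EuclideanSpace ℝ (Fin n)} (hx : x ≠ 0) :
    ∃ i, hA.eigenvectorBasis.repr x i ≠ 0 := by
  by_contra h
  push_neg at h
  apply hx
  have : hA.eigenvectorBasis.repr x = 0 := by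
    ext i; exact h i
  simpa using hA.eigenvectorBasis.repr.injective (by simpa using this)

lemma exists_posSubspace {A : Matrix (Fin n) (Fin n) ℝ} (hA : A.IsHermitian) :
    ∃ V : Submodule ℝ (EuclideanSpace ℝ (Fin n)),
      Module.finrank ℝ V = (Finset.univ.filter fun i => 0 < hA.eigenvalues i).card ∧
      ∀ x ∈ V, x ≠ 0 → 0 < quadF A x := by
  obtain ⟨V, hdim, hrep⟩ := span_stuff hA (Finset.univ.filter fun i => 0 < hA.eigenvalues i)
  refine ⟨V, hdim, fun x hx hx0 => ?_⟩
  rw [quad_eq_sum hA x]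
  obtain ⟨i0, hi0⟩ := repr_ne_zero hA hx0
  have hi0t : i0 ∈ Finset.univ.filter fun i => 0 < hA.eigenvalues i := by
    by_contra h; exact hi0 (hrep x hx i0 h)
  apply Finset.sum_pos' _ ⟨i0, Finset.mem_univ i0, ?_⟩
  · intro i _
    by_cases h : i ∈ Finset.univ.filter fun j => 0 < hA.eigenvalues j
    · have := (Finset.mem_filter.mp h).2
      exact mul_nonneg this.le (sq_nonneg _)
    · rw [hrep x hx i h]; simp
  · have he := (Finset.mem_filter.mp hi0t).2
    have : 0 < hA.eigenvectorBasis.repr x i0 ^ 2 := by rw [sq]; exact mul_self_pos.mpr hi0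
    exact mul_pos he this

lemma exists_negSubspace {A : Matrix (Fin n) (Fin n) ℝ} (hA : A.IsHermitian) :
    ∃ V : Submodule ℝ (EuclideanSpace ℝ (Fin n)),
      Module.finrank ℝ V = (Finset.univ.filter fun i => hA.eigenvalues i < 0).card ∧
      ∀ x ∈ V, x ≠ 0 → quadF A x < 0 := by
  obtain ⟨V, hdim, hrep⟩ := span_stuff hA (Finset.univ.filter fun i => hA.eigenvalues i < 0)
  refine ⟨V, hdim, fun x hx hx0 => ?_⟩
  rw [quad_eq_sum hA x]
  obtain ⟨i0, hi0⟩ := repr_ne_zero hA hx0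
  have hi0t : i0 ∈ Finset.univ.filter fun i => hA.eigenvalues i < 0 := by
    by_contra h; exact hi0 (hrep x hx i0 h)
  have : ∑ i, -(hA.eigenvalues i * hA.eigenvectorBasis.repr x i ^ 2) > 0 := by
    apply Finset.sum_pos' _ ⟨i0, Finset.mem_univ i0, ?_⟩
    · intro i _
      by_cases h : i ∈ Finset.univ.filter fun j => hA.eigenvalues j < 0
      · have h1 := (Finset.mem_filter.mp h).2
        have h2 : hA.eigenvalues i * hA.eigenvectorBasis.repr x i ^ 2 ≤ 0 :=
          mul_nonpos_iff.mpr (Or.inr ⟨h1.le, sq_nonneg _⟩)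
        linarith
      · rw [hrep x hx i h]; simp
    · have he := (Finset.mem_filter.mp hi0t).2
      have h2 : 0 < hA.eigenvectorBasis.repr x i0 ^ 2 := by rw [sq]; exact mul_self_pos.mpr hi0
      nlinarith
  have h3 : -∑ i, (hA.eigenvalues i * hA.eigenvectorBasis.repr x i ^ 2) > 0 := by
    rw [← Finset.sum_neg_distrib]; exact this
  linarith

lemma exists_nonposSubspace {A : Matrix (Fin n) (Fin n) ℝ} (hA : A.IsHermitian) :
    ∃ V : Submodule ℝ (EuclideanSpace ℝ (Fin n)),
      Module.finrank ℝ V = n - (Finset.univ.filter fun i => 0 < hA.eigenvalues i).card ∧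
      ∀ x ∈ V, quadF A x ≤ 0 := by
  obtain ⟨V, hdim, hrep⟩ := span_stuff hA (Finset.univ.filter fun i => ¬ 0 < hA.eigenvalues i)
  refine ⟨V, ?_, fun x hx => ?_⟩
  · rw [hdim, Finset.filter_not, Finset.card_sdiff_of_subset (Finset.filter_subset _ _)]
    simp
  · rw [quad_eq_sum hA x]
    apply Finset.sum_nonpos
    intro i _
    by_cases h : i ∈ Finset.univ.filter fun j => ¬ 0 < hA.eigenvalues j
    · have := (Finset.mem_filter.mp h).2
      exact mul_nonpos_iff.mpr (Or.inr ⟨le_of_not_gt this, sq_nonneg _⟩)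
    · rw [hrep x hx i h]; simp

lemma exists_nonnegSubspace {A : Matrix (Fin n) (Fin n) ℝ} (hA : A.IsHermitian) :
    ∃ V : Submodule ℝ (EuclideanSpace ℝ (Fin n)),
      Module.finrank ℝ V = n - (Finset.univ.filter fun i => hA.eigenvalues i < 0).card ∧
      ∀ x ∈ V, 0 ≤ quadF A x := by
  obtain ⟨V, hdim, hrep⟩ := span_stuff hA (Finset.univ.filter fun i => ¬ hA.eigenvalues i < 0)
  refine ⟨V, ?_, fun x hx => ?_⟩
  · rw [hdim, Finset.filter_not, Finset.card_sdiff_of_subset (Finset.filter_subset _ _)]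
    simp
  · rw [quad_eq_sum hA x]
    apply Finset.sum_nonneg
    intro i _
    by_cases h : i ∈ Finset.univ.filter fun j => ¬ hA.eigenvalues j < 0
    · have := (Finset.mem_filter.mp h).2
      exact mul_nonneg (le_of_not_gt this) (sq_nonneg _)
    · rw [hrep x hx i h]; simp

def mulVecE (P : Matrix (Fin n) (Fin n) ℝ) :
    EuclideanSpace ℝ (Fin n) →ₗ[ℝ] EuclideanSpace ℝ (Fin n) where
  toFun x := WithLp.toLp 2 (P *ᵥ x)
  map_add' x y := by simp [Matrix.mulVec_add]
  map_smul' c x := by simp [Matrix.mulVec_smul]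

lemma quadF_neg (A : Matrix (Fin n) (Fin n) ℝ) (x : Fin n → ℝ) :
    quadF (-A) x = -quadF A x := by
  simp [quadF, Matrix.neg_mulVec, dotProduct_neg]

lemma quadF_congr (A P : Matrix (Fin n) (Fin n) ℝ) (y : Fin n → ℝ) :
    quadF (Pᵀ * A * P) y = quadF A (P *ᵥ y) := by
  unfold quadF
  rw [← Matrix.mulVec_mulVec, ← Matrix.mulVec_mulVec, Matrix.dotProduct_mulVec,
    Matrix.vecMul_transpose]

lemma dim_add_dim_le (A P : Matrix (Fin n) (Fin n) ℝ) (hP : IsUnit P.det)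
    (V W : Submodule ℝ (EuclideanSpace ℝ (Fin n)))
    (hV : ∀ x ∈ V, x ≠ 0 → 0 < quadF (Pᵀ * A * P) x)
    (hW : ∀ x ∈ W, quadF A x ≤ 0) :
    Module.finrank ℝ V + Module.finrank ℝ W ≤ n := by
  by_contra hlt
  push_neg at hlt
  set L := mulVecE (n := n) P with hL
  have hinj : Function.Injective L := by
    intro x y hxy
    have h1 : P⁻¹ *ᵥ (P *ᵥ (x : Fin n → ℝ)) = P⁻¹ *ᵥ (P *ᵥ (y : Fin n → ℝ)) :=
      congrArg (fun v : Fin n → ℝ => P⁻¹ *ᵥ v) (congrArg WithLp.ofLp hxy)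
    rw [Matrix.mulVec_mulVec, Matrix.mulVec_mulVec, Matrix.nonsing_inv_mul _ hP,
      Matrix.one_mulVec, Matrix.one_mulVec] at h1
    exact congrArg (WithLp.toLp 2) h1
  set U := V.map L with hU'
  have hU : Module.finrank ℝ U = Module.finrank ℝ V :=
    ((Submodule.equivMapOfInjective L hinj V).finrank_eq).symm
  have hle : Module.finrank ℝ (U ⊔ W : Submodule ℝ _) ≤ n := by
    have h := Submodule.finrank_le (U ⊔ W : Submodule ℝ (EuclideanSpace ℝ (Fin n)))
    simpa using h
  have hsum := Submodule.finrank_sup_add_finrank_inf_eq U W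
  have hpos : 0 < Module.finrank ℝ (U ⊓ W : Submodule ℝ _) := by omega
  have hnb : (U ⊓ W : Submodule ℝ _) ≠ ⊥ := by
    intro h; rw [h] at hpos; simp at hpos
  obtain ⟨z, hz, hz0⟩ := (Submodule.ne_bot_iff _).mp hnb
  obtain ⟨y, hyV, hyz⟩ := Submodule.mem_map.mp hz.1
  have hy0 : y ≠ 0 := by
    rintro rfl; exact hz0 (by rw [← hyz]; exact map_zero L)
  have h1 : 0 < quadF (Pᵀ * A * P) y := hV y hyV hy0
  have h2 : quadF A z ≤ 0 := hW z hz.2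
  rw [quadF_congr] at h1
  rw [show (P *ᵥ (y : Fin n → ℝ)) = (z : Fin n → ℝ) from congrArg WithLp.ofLp hyz] at h1
  linarith

lemma count_pos_le (A B P : Matrix (Fin n) (Fin n) ℝ) (hA : A.IsHermitian)
    (hB : B.IsHermitian) (hP : IsUnit P.det) (hE : B = Pᵀ * A * P) :
    (Finset.univ.filter fun i => 0 < hB.eigenvalues i).card ≤
      (Finset.univ.filter fun i => 0 < hA.eigenvalues i).card := by
  obtain ⟨V, hVdim, hVq⟩ := exists_posSubspace hB
  obtain ⟨W, hWdim, hWq⟩ := exists_nonposSubspace hA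
  have key := dim_add_dim_le A P hP V W (fun x hx hx0 => by rw [← hE]; exact hVq x hx hx0) hWq
  have hcA : (Finset.univ.filter fun i => 0 < hA.eigenvalues i).card ≤ n := by
    have := Finset.card_filter_le Finset.univ (fun i => 0 < hA.eigenvalues i)
    simpa using this
  omega

lemma count_neg_le (A B P : Matrix (Fin n) (Fin n) ℝ) (hA : A.IsHermitian)
    (hB : B.IsHermitian) (hP : IsUnit P.det) (hE : B = Pᵀ * A * P) :
    (Finset.univ.filter fun i => hB.eigenvalues i < 0).card ≤
      (Finset.univ.filter fun i => hA.eigenvalues i < 0).card := by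
  obtain ⟨V, hVdim, hVq⟩ := exists_negSubspace hB
  obtain ⟨W, hWdim, hWq⟩ := exists_nonnegSubspace hA
  have hE' : Pᵀ * (-A) * P = -B := by rw [hE]; simp [Matrix.mul_neg, Matrix.neg_mul]
  have key := dim_add_dim_le (-A) P hP V W
    (fun x hx hx0 => by rw [hE', quadF_neg]; linarith [hVq x hx hx0])
    (fun x hx => by rw [quadF_neg]; linarith [hWq x hx])
  have hcA : (Finset.univ.filter fun i => hA.eigenvalues i < 0).card ≤ n := by
    have := Finset.card_filter_le Finset.univ (fun i => hA.eigenvalues i < 0)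
    simpa using this
  omega

lemma inv_congr (A B P : Matrix (Fin n) (Fin n) ℝ) (hP : IsUnit P.det)
    (hE : B = Pᵀ * A * P) : A = (P⁻¹)ᵀ * B * P⁻¹ := by
  rw [hE]
  have h1 : (P⁻¹)ᵀ * (Pᵀ * A * P) * P⁻¹ = ((P⁻¹)ᵀ * Pᵀ) * A * (P * P⁻¹) := by
    simp only [Matrix.mul_assoc]
  rw [h1, ← Matrix.transpose_mul, Matrix.mul_nonsing_inv _ hP, Matrix.transpose_one, one_mul,
    mul_one]

lemma count_pos_eq (A B P : Matrix (Fin n) (Fin n) ℝ) (hA : A.IsHermitian)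
    (hB : B.IsHermitian) (hP : IsUnit P.det) (hE : B = Pᵀ * A * P) :
    (Finset.univ.filter fun i => 0 < hB.eigenvalues i).card =
      (Finset.univ.filter fun i => 0 < hA.eigenvalues i).card :=
  le_antisymm (count_pos_le A B P hA hB hP hE)
    (count_pos_le B A P⁻¹ hB hA (Matrix.isUnit_nonsing_inv_det P hP) (inv_congr A B P hP hE))

lemma count_neg_eq (A B P : Matrix (Fin n) (Fin n) ℝ) (hA : A.IsHermitian)
    (hB : B.IsHermitian) (hP : IsUnit P.det) (hE : B = Pᵀ * A * P) :
    (Finset.univ.filter fun i => hB.eigenvalues i < 0).card =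
      (Finset.univ.filter fun i => hA.eigenvalues i < 0).card :=
  le_antisymm (count_neg_le A B P hA hB hP hE)
    (count_neg_le B A P⁻¹ hB hA (Matrix.isUnit_nonsing_inv_det P hP) (inv_congr A B P hP hE))

-- === charpoly roots machinery ===

lemma charpoly_conj {n : Type} [Fintype n] [DecidableEq n] (U D : Matrix n n ℝ)
    (h1 : U * star U = 1) : (U * D * star U).charpoly = D.charpoly := by
  have h2 : star U * U = 1 := mul_eq_one_comm.mp h1
  unfold Matrix.charpoly
  have hmap : ∀ X Y : Matrix n n ℝ, (X * Y).map (C : ℝ → ℝ[X]) = X.map C * Y.map C := by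
    intro X Y; exact Matrix.map_mul
  have hV : (U.map (C : ℝ → ℝ[X])) * ((star U).map C) = 1 := by
    rw [← hmap, h1]; ext i j; simp [Matrix.map_apply, Matrix.one_apply]
  have key : charmatrix (U * D * star U) = (U.map C) * charmatrix D * ((star U).map C) := by
    rw [charmatrix, charmatrix]
    rw [mul_sub, sub_mul]
    congr 1
    · rw [show (Matrix.scalar n (X : ℝ[X])) = (X : ℝ[X]) • (1 : Matrix n n ℝ[X]) by
        simp [Matrix.scalar, smul_eq_diagonal_mul]]
      rw [Matrix.mul_smul, mul_one, Matrix.smul_mul, hV]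
    · simp only [RingHom.mapMatrix_apply]
      rw [← hmap, ← hmap]
  rw [key, det_mul, det_mul, mul_right_comm, ← det_mul, hV, det_one, one_mul]

lemma charpoly_diagonal {n : Type} [Fintype n] [DecidableEq n] (d : n → ℝ) :
    (Matrix.diagonal d).charpoly = ∏ i, (X - C (d i)) := by
  unfold Matrix.charpoly
  have : charmatrix (Matrix.diagonal d) = Matrix.diagonal (fun i => X - C (d i)) := by
    ext i j
    by_cases h : i = j
    · subst h; simp [charmatrix_apply_eq]
    · simp [charmatrix_apply_ne _ _ _ h, Matrix.diagonal_apply_ne _ h]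
  rw [this, det_diagonal]

lemma roots_charpoly {n : ℕ} {A : Matrix (Fin n) (Fin n) ℝ} (hA : A.IsHermitian) :
    A.charpoly.roots = Multiset.map hA.eigenvalues Finset.univ.val := by
  have hU := (Matrix.mem_unitaryGroup_iff).mp (hA.eigenvectorUnitary).2
  have h := hA.spectral_theorem
  rw [show (RCLike.ofReal ∘ hA.eigenvalues : Fin n → ℝ) = hA.eigenvalues by funext i; simp [RCLike.ofReal]] at h
  have hcp : A.charpoly = (Matrix.diagonal hA.eigenvalues).charpoly := by
    conv_lhs => rw [h]
    exact charpoly_conj _ _ hU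
  rw [hcp, _root_.charpoly_diagonal]
  rw [show ∏ i, (X - C (hA.eigenvalues i)) =
      (Multiset.map (fun a => X - C a) (Multiset.map hA.eigenvalues Finset.univ.val)).prod by
    rw [Multiset.map_map]; rfl]
  exact roots_multiset_prod_X_sub_C _

lemma card_roots_filter {n : ℕ} {A : Matrix (Fin n) (Fin n) ℝ} (hA : A.IsHermitian)
    (p : ℝ → Prop) [DecidablePred p] :
    (A.charpoly.roots.filter p).card = (Finset.univ.filter (fun i => p (hA.eigenvalues i))).card := by
  rw [roots_charpoly hA, Multiset.filter_map, Multiset.card_map]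
  rfl

lemma roots_card {A : Matrix (Fin n) (Fin n) ℝ} (hA : A.IsHermitian) :
    A.charpoly.roots.card = n := by
  rw [roots_charpoly hA, Multiset.card_map]
  simp

lemma multiset_sign_partition (s : Multiset ℝ) :
    (s.filter (fun x => x < 0)).card + (s.filter (fun x => x = 0)).card
      + (s.filter (fun x => 0 < x)).card = s.card := by
  induction s using Multiset.induction with
  | empty => simp
  | cons a s ih =>
    simp only [Multiset.filter_cons, Multiset.card_add, Multiset.card_cons, apply_ite,
      Multiset.card_singleton, Multiset.card_zero]
    rcases lt_trichotomy a 0 with h | h | h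
    · rw [if_pos h, if_neg (by simp [h.ne]), if_neg (by simp [asymm h])]; omega
    · rw [if_neg (by simp [h]), if_pos h, if_neg (by simp [h])]; omega
    · rw [if_neg (by simp [asymm h]), if_neg (by simp [h.ne']), if_pos h]; omega

lemma roots_counts_congr (A B P : Matrix (Fin n) (Fin n) ℝ) (hA : A.IsHermitian)
    (hB : B.IsHermitian) (hP : IsUnit P.det) (hE : B = Pᵀ * A * P) :
    ((B.charpoly.roots.filter (fun x => x < 0)).card =
        (A.charpoly.roots.filter (fun x => x < 0)).card) ∧
    ((B.charpoly.roots.filter (fun x => x = 0)).card =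
        (A.charpoly.roots.filter (fun x => x = 0)).card) ∧
    ((B.charpoly.roots.filter (fun x => 0 < x)).card =
        (A.charpoly.roots.filter (fun x => 0 < x)).card) := by
  have hneg : (B.charpoly.roots.filter (fun x => x < 0)).card =
      (A.charpoly.roots.filter (fun x => x < 0)).card := by
    rw [card_roots_filter hB, card_roots_filter hA]
    exact count_neg_eq A B P hA hB hP hE
  have hpos : (B.charpoly.roots.filter (fun x => 0 < x)).card =
      (A.charpoly.roots.filter (fun x => 0 < x)).card := by
    rw [card_roots_filter hB, card_roots_filter hA]
    exact count_pos_eq A B P hA hB hP hE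
  refine ⟨hneg, ?_, hpos⟩
  have h1 := multiset_sign_partition A.charpoly.roots
  have h2 := multiset_sign_partition B.charpoly.roots
  rw [roots_card hA] at h1
  rw [roots_card hB] at h2
  omega

-- === block sum counts ===
lemma roots_block {m : ℕ} (B : Matrix (Fin m) (Fin m) ℝ) (H2 : Matrix (Fin 2) (Fin 2) ℝ) :
    ((Matrix.reindex finSumFinEquiv finSumFinEquiv
        (Matrix.fromBlocks B 0 0 H2)).charpoly).roots = B.charpoly.roots + H2.charpoly.roots := by
  rw [Matrix.charpoly_reindex, Matrix.charpoly_fromBlocks_zero₁₂]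
  exact Polynomial.roots_mul (mul_ne_zero (B.charpoly_monic.ne_zero) (H2.charpoly_monic.ne_zero))

def Hmat : Matrix (Fin 2) (Fin 2) ℝ := !![0, 1; 1, 0]

lemma Hmat_roots : Hmat.charpoly.roots = {1, -1} := by
  have h1 : Hmat.charpoly = (X - C 1) * (X - C (-1)) := by
    unfold Matrix.charpoly
    rw [Matrix.det_fin_two]
    simp [charmatrix_apply_eq, charmatrix_apply_ne, Hmat]
    ring
  rw [h1, Polynomial.roots_mul (by
      intro h
      have := congrArg (fun p => p.eval (2:ℝ)) h
      simp at this; norm_num at this),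
    Polynomial.roots_X_sub_C, Polynomial.roots_X_sub_C]
  rfl

lemma Hmat_counts :
    (Hmat.charpoly.roots.filter (fun x => x < 0)).card = 1 ∧
    (Hmat.charpoly.roots.filter (fun x => x = 0)).card = 0 ∧
    (Hmat.charpoly.roots.filter (fun x => 0 < x)).card = 1 := by
  rw [Hmat_roots]
  norm_num [Multiset.filter_cons, Multiset.filter_singleton]


def arb (n : ℕ) (i : ℕ) : Prop :=
  if n % 2 = 0 then i % 2 = 1 else (2 ≤ i ∧ i % 2 = 0)

lemma antiRegular_adj {n : ℕ} (i j : Fin n) :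
    (antiRegular n).Adj i j ↔
      ((i : ℕ) < (j : ℕ) ∧ arb n j) ∨ ((j : ℕ) < (i : ℕ) ∧ arb n i) := by
  have h0 : (antiRegular n).Adj i j ↔
      ((i < j ∧ (if n % 2 = 0 then decide ((j : ℕ) % 2 = 1)
          else decide (2 ≤ (j : ℕ) ∧ (j : ℕ) % 2 = 0)) = true) ∨
       (j < i ∧ (if n % 2 = 0 then decide ((i : ℕ) % 2 = 1)
          else decide (2 ≤ (i : ℕ) ∧ (i : ℕ) % 2 = 0)) = true)) := Iff.rfl
  rw [h0]
  unfold arb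
  by_cases h : n % 2 = 0
  · simp only [if_pos h, decide_eq_true_eq, Fin.lt_def]
  · simp only [if_neg h, decide_eq_true_eq, Fin.lt_def]

lemma arb_sub {m : ℕ} (i : ℕ) : arb (m + 2) i ↔ arb m i := by
  unfold arb
  have h : (m + 2) % 2 = m % 2 := by omega
  rw [h]

lemma arb_last {m : ℕ} : arb (m + 2) (m + 1) := by
  unfold arb; split_ifs with h <;> omega

lemma arb_pen {m : ℕ} : ¬ arb (m + 2) m := by
  unfold arb; split_ifs with h <;> omega

lemma adjMat_herm {V : Type} [Fintype V] [DecidableEq V] (G : SimpleGraph V) :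
    (adjMat G).IsHermitian := by
  ext i j
  simp only [adjMat, Matrix.conjTranspose_apply, Matrix.of_apply, star_trivial]
  rw [SimpleGraph.adj_comm]

lemma adjMat_diag {V : Type} [Fintype V] [DecidableEq V] (G : SimpleGraph V) (i : V) :
    adjMat G i i = 0 := by
  simp [adjMat]

section step
variable {m : ℕ}

def pp : Fin (m + 2) := ⟨m, by omega⟩
def qq : Fin (m + 2) := ⟨m + 1, by omega⟩

lemma M_ap (a : Fin (m + 2)) (ha : (a : ℕ) < m) : adjMat (antiRegular (m + 2)) a pp = 0 := by
  rw [adjMat, Matrix.of_apply, if_neg]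
  rw [antiRegular_adj]
  push_neg
  constructor
  · intro _; exact arb_pen
  · intro h; exact absurd h (by simp [pp]; omega)

lemma M_aq (a : Fin (m + 2)) (ha : (a : ℕ) < m + 1) : adjMat (antiRegular (m + 2)) a qq = 1 := by
  rw [adjMat, Matrix.of_apply, if_pos]
  rw [antiRegular_adj]
  exact Or.inl ⟨by simpa [qq] using ha, arb_last⟩

lemma M_symm (a b : Fin (m + 2)) :
    adjMat (antiRegular (m + 2)) a b = adjMat (antiRegular (m + 2)) b a := by
  have h := adjMat_herm (antiRegular (m + 2))
  conv_lhs => rw [← h]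
  simp [Matrix.conjTranspose_apply]

lemma M_sub (a b : Fin (m + 2)) (ha : (a : ℕ) < m) (hb : (b : ℕ) < m) :
    adjMat (antiRegular (m + 2)) a b = adjMat (antiRegular m) ⟨a, ha⟩ ⟨b, hb⟩ := by
  unfold adjMat
  simp only [Matrix.of_apply]
  congr 1
  rw [antiRegular_adj, antiRegular_adj]
  simp only [arb_sub]
end step

section cong
variable {m : ℕ}

def Nmat (m : ℕ) : Matrix (Fin (m + 2)) (Fin (m + 2)) ℝ :=
  Matrix.of fun j i => if j = pp ∧ (i : ℕ) < m then 1 else 0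

def Emat (m : ℕ) : Matrix (Fin (m + 2)) (Fin (m + 2)) ℝ := 1 - Nmat m

lemma NN : Nmat m * Nmat m = 0 := by
  ext a b
  rw [Matrix.mul_apply]
  refine (Finset.sum_eq_zero fun k _ => ?_).trans rfl |>.trans (by simp)
  by_cases h1 : a = pp ∧ (k : ℕ) < m
  · by_cases h2 : k = pp ∧ (b : ℕ) < m
    · exfalso
      have := h1.2
      rw [h2.1] at this
      simp [pp] at this
    · simp [Nmat, h2]
  · simp [Nmat, h1]

lemma Emat_unit : IsUnit (Emat m).det := by
  have h : Emat m * (1 + Nmat m) = 1 := by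
    unfold Emat
    rw [sub_mul, mul_add, mul_add, one_mul, one_mul, mul_one, NN]
    abel
  have := congrArg Matrix.det h
  rw [Matrix.det_mul, Matrix.det_one] at this
  exact IsUnit.of_mul_eq_one _ this

lemma XN (X : Matrix (Fin (m + 2)) (Fin (m + 2)) ℝ) (a b : Fin (m + 2)) :
    (X * Nmat m) a b = if (b : ℕ) < m then X a pp else 0 := by
  rw [Matrix.mul_apply]
  by_cases hb : (b : ℕ) < m
  · rw [if_pos hb, Finset.sum_eq_single pp]
    · simp [Nmat, hb]
    · intro k _ hk; simp [Nmat, hk]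
    · intro h; exact absurd (Finset.mem_univ pp) h
  · rw [if_neg hb]
    exact Finset.sum_eq_zero fun k _ => by simp [Nmat, hb]

lemma NtX (X : Matrix (Fin (m + 2)) (Fin (m + 2)) ℝ) (a b : Fin (m + 2)) :
    ((Nmat m)ᵀ * X) a b = if (a : ℕ) < m then X pp b else 0 := by
  rw [Matrix.mul_apply]
  by_cases ha : (a : ℕ) < m
  · rw [if_pos ha, Finset.sum_eq_single pp]
    · simp [Nmat, Matrix.transpose_apply, ha]
    · intro k _ hk; simp [Nmat, Matrix.transpose_apply, hk]
    · intro h; exact absurd (Finset.mem_univ pp) h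
  · rw [if_neg ha]
    exact Finset.sum_eq_zero fun k _ => by simp [Nmat, Matrix.transpose_apply, ha]

lemma EME_apply (M : Matrix (Fin (m + 2)) (Fin (m + 2)) ℝ) (a b : Fin (m + 2)) :
    ((Emat m)ᵀ * M * (Emat m)) a b =
      M a b - (if (b : ℕ) < m then M a pp else 0)
        - (if (a : ℕ) < m then M pp b else 0)
        + (if (a : ℕ) < m then (if (b : ℕ) < m then M pp pp else 0) else 0) := by
  have hE : (Emat m)ᵀ * M * (Emat m)
      = M - (Nmat m)ᵀ * M - M * Nmat m + (Nmat m)ᵀ * (M * Nmat m) := by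
    unfold Emat
    rw [Matrix.transpose_sub, Matrix.transpose_one]
    noncomm_ring
  rw [hE]
  simp only [Matrix.add_apply, Matrix.sub_apply]
  rw [XN, NtX, NtX (M * Nmat m)]
  by_cases ha : (a : ℕ) < m <;> by_cases hb : (b : ℕ) < m <;>
    simp [ha, hb, XN] <;> ring
end cong


lemma main_congr (m : ℕ) :
    (Emat m)ᵀ * adjMat (antiRegular (m + 2)) * Emat m =
      Matrix.reindex finSumFinEquiv finSumFinEquiv
        (Matrix.fromBlocks (adjMat (antiRegular m)) 0 0 Hmat) := by
  have jcase : ∀ j : Fin 2, j = 0 ∨ j = 1 := by decide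
  have hp : finSumFinEquiv (Sum.inr (0 : Fin 2)) = (pp : Fin (m + 2)) := by
    apply Fin.ext; simp [pp]
  have hq : finSumFinEquiv (Sum.inr (1 : Fin 2)) = (qq : Fin (m + 2)) := by
    apply Fin.ext; simp [qq]
  have hppm : ¬ ((pp : Fin (m + 2)) : ℕ) < m := by simp [pp]
  have hqqm : ¬ ((qq : Fin (m + 2)) : ℕ) < m := by simp [qq]
  have key : ∀ (u v : Fin m ⊕ Fin 2),
      ((Emat m)ᵀ * adjMat (antiRegular (m + 2)) * Emat m) (finSumFinEquiv u) (finSumFinEquiv v)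
        = Matrix.fromBlocks (adjMat (antiRegular m)) 0 0 Hmat u v := by
    intro u v
    rw [EME_apply]
    cases u with
    | inl a =>
      have hau : ((finSumFinEquiv (Sum.inl a) : Fin (m + 2)) : ℕ) = (a : ℕ) := by simp
      have ham : ((finSumFinEquiv (Sum.inl a) : Fin (m + 2)) : ℕ) < m := by rw [hau]; exact a.isLt
      cases v with
      | inl b =>
        have hbu : ((finSumFinEquiv (Sum.inl b) : Fin (m + 2)) : ℕ) = (b : ℕ) := by simp
        have hbm : ((finSumFinEquiv (Sum.inl b) : Fin (m + 2)) : ℕ) < m := by rw [hbu]; exact b.isLt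
        rw [if_pos hbm, if_pos ham, M_ap _ ham, M_symm pp _, M_ap _ hbm, adjMat_diag,
          M_sub _ _ ham hbm]
        simp only [Matrix.fromBlocks_apply₁₁]
        rw [show (⟨_, ham⟩ : Fin m) = a from Fin.ext hau,
          show (⟨_, hbm⟩ : Fin m) = b from Fin.ext hbu]
        simp [ham, hbm]
      | inr j =>
        rcases jcase j with rfl | rfl
        · rw [hp, if_neg hppm, if_pos ham, M_ap _ ham, adjMat_diag]
          simp [Matrix.fromBlocks_apply₁₂, adjMat_diag, hppm, hqqm, ham]
        · rw [hq, if_neg hqqm, if_pos ham, M_aq _ (by omega), M_aq _ (by simp [pp])]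
          simp [Matrix.fromBlocks_apply₁₂, adjMat_diag, hppm, hqqm, ham]
    | inr j =>
      cases v with
      | inl b =>
        have hbu : ((finSumFinEquiv (Sum.inl b) : Fin (m + 2)) : ℕ) = (b : ℕ) := by simp
        have hbm : ((finSumFinEquiv (Sum.inl b) : Fin (m + 2)) : ℕ) < m := by rw [hbu]; exact b.isLt
        rcases jcase j with rfl | rfl
        · rw [hp, if_pos hbm, if_neg hppm, M_symm pp _, M_ap _ hbm, adjMat_diag]
          simp [Matrix.fromBlocks_apply₂₁, adjMat_diag, hppm, hqqm, hbm]
        · rw [hq, if_pos hbm, if_neg hqqm, M_symm qq _, M_aq _ (by omega),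
            M_symm qq pp, M_aq _ (by simp [pp])]
          simp [Matrix.fromBlocks_apply₂₁, adjMat_diag, hppm, hqqm, hbm]
      | inr j' =>
        rcases jcase j with rfl | rfl <;> rcases jcase j' with rfl | rfl
        · rw [hp, if_neg hppm, adjMat_diag]
          simp [Matrix.fromBlocks_apply₂₂, Hmat, adjMat_diag, hppm, hqqm]
        · rw [hp, hq, if_neg hqqm, if_neg hppm, M_aq _ (by simp [pp])]
          simp [Matrix.fromBlocks_apply₂₂, Hmat, adjMat_diag, hppm, hqqm]
        · rw [hq, hp, if_neg hppm, if_neg hqqm, M_symm qq pp, M_aq _ (by simp [pp])]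
          simp [Matrix.fromBlocks_apply₂₂, Hmat, adjMat_diag, hppm, hqqm]
        · rw [hq, if_neg hqqm, adjMat_diag]
          simp [Matrix.fromBlocks_apply₂₂, Hmat, adjMat_diag, hppm, hqqm]
  ext a b
  rw [Matrix.reindex_apply, Matrix.submatrix_apply]
  have h := key (finSumFinEquiv.symm a) (finSumFinEquiv.symm b)
  rwa [Equiv.apply_symm_apply, Equiv.apply_symm_apply] at h

lemma counts_all : ∀ n : ℕ,
    ((adjMat (antiRegular n)).charpoly.roots.filter (fun x => x < 0)).card = n / 2 ∧
    ((adjMat (antiRegular n)).charpoly.roots.filter (fun x => x = 0)).card = n % 2 ∧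
    ((adjMat (antiRegular n)).charpoly.roots.filter (fun x => 0 < x)).card = n / 2 := by
  intro n
  induction n using Nat.twoStepInduction with
  | zero =>
    have h : (adjMat (antiRegular 0)).charpoly = 1 := by
      unfold Matrix.charpoly
      exact Matrix.det_isEmpty
    simp [h]
  | one =>
    have h : (adjMat (antiRegular 1)).charpoly = Polynomial.X := by
      unfold Matrix.charpoly
      rw [Matrix.det_fin_one, Matrix.charmatrix_apply_eq, adjMat_diag]
      simp
    rw [h, Polynomial.roots_X]
    refine ⟨?_, ?_, ?_⟩ <;> norm_num [Multiset.filter_singleton]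
  | more m ih _ =>
    have hA : (adjMat (antiRegular (m + 2))).IsHermitian := adjMat_herm _
    have hT : (Emat m)ᵀ = (Emat m)ᴴ := by
      ext i j; simp [Matrix.conjTranspose_apply]
    have hD : (Matrix.reindex finSumFinEquiv finSumFinEquiv
        (Matrix.fromBlocks (adjMat (antiRegular m)) 0 0 Hmat)).IsHermitian := by
      rw [← main_congr m, hT]
      exact Matrix.isHermitian_conjTranspose_mul_mul _ hA
    obtain ⟨c1, c2, c3⟩ := roots_counts_congr (adjMat (antiRegular (m + 2)))
      (Matrix.reindex finSumFinEquiv finSumFinEquiv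
        (Matrix.fromBlocks (adjMat (antiRegular m)) 0 0 Hmat)) (Emat m)
      hA hD Emat_unit (main_congr m).symm
    have hroots : (Matrix.reindex finSumFinEquiv finSumFinEquiv
        (Matrix.fromBlocks (adjMat (antiRegular m)) 0 0 Hmat)).charpoly.roots =
        (adjMat (antiRegular m)).charpoly.roots + Hmat.charpoly.roots := roots_block _ _
    obtain ⟨i1, i2, i3⟩ := ih
    obtain ⟨h1, h2, h3⟩ := Hmat_counts
    rw [hroots] at c1 c2 c3
    simp only [Multiset.filter_add, Multiset.card_add] at c1 c2 c3
    rw [i1, h1] at c1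
    rw [i2, h2] at c2
    rw [i3, h3] at c3
    refine ⟨?_, ?_, ?_⟩
    · rw [← c1]; omega
    · rw [← c2]; omega
    · rw [← c3]; omega

end AuxInertia

/-- the inertia of the anti-regular graph: `A_{2k}` has `k` negative, no zero and
`k` positive eigenvalues; `A_{2k+1}` has `k` negative, one zero and `k` positive eigenvalues
(counted with multiplicity, via the real roots of the characteristic polynomial). -/
theorem antiregular_inertia (k : ℕ) :
    ((((adjMat (antiRegular (2 * k))).charpoly.roots.filter (fun x => x < 0)).card = k ∧
      (((adjMat (antiRegular (2 * k))).charpoly.roots.filter (fun x => x = 0)).card = 0) ∧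
      (((adjMat (antiRegular (2 * k))).charpoly.roots.filter (fun x => 0 < x)).card = k)) ∧
     (((adjMat (antiRegular (2 * k + 1))).charpoly.roots.filter (fun x => x < 0)).card = k ∧
      (((adjMat (antiRegular (2 * k + 1))).charpoly.roots.filter (fun x => x = 0)).card = 1) ∧
      (((adjMat (antiRegular (2 * k + 1))).charpoly.roots.filter (fun x => 0 < x)).card = k))) := by
  obtain ⟨a1, a2, a3⟩ := counts_all (2 * k)
  obtain ⟨b1, b2, b3⟩ := counts_all (2 * k + 1)
  refine ⟨⟨?_, ?_, ?_⟩, ?_, ?_, ?_⟩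
  · rw [a1]; omega
  · rw [a2]; omega
  · rw [a3]; omega
  · rw [b1]; omega
  · rw [b2]; omega
  · rw [b3]; omega
end
end

section
/- For every k ≥ 2, the adjacency matrix of the even anti-regular graph A_{2k} has -1 as an eigenvalue. -/
open scoped Classical

noncomputable section

/-- for `k ≥ 2`, the even anti-regular graph `A_{2k}` has `-1` as an eigenvalue. -/
theorem antiregular_even_has_negone_eigenvalue (k : ℕ) (hk : 2 ≤ k) :
    IsEigenvalue (adjMat (antiRegular (2 * k))) (-1) := by
  have h0 : (0:ℕ) < 2*k := by omega
  have h1 : (1:ℕ) < 2*k := by omega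
  set v0 : Fin (2*k) := ⟨0, h0⟩ with hv0
  set v1 : Fin (2*k) := ⟨1, h1⟩ with hv1
  refine ⟨fun i => if i = v0 then 1 else if i = v1 then -1 else 0, ?_, ?_⟩
  · intro h
    have := congrFun h v0
    simp at this
  · funext j
    have hne : v0 ≠ v1 := by simp [hv0, hv1, Fin.ext_iff]
    have hsum : ∀ f : Fin (2*k) → ℝ, (∀ i, i ≠ v0 → i ≠ v1 → f i = 0) →
        ∑ i, f i = f v0 + f v1 := by
      intro f hf
      rw [← Finset.sum_subset (Finset.subset_univ {v0, v1})]
      · rw [Finset.sum_pair hne]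
      · intro i _ hi
        simp only [Finset.mem_insert, Finset.mem_singleton, not_or] at hi
        exact hf i hi.1 hi.2
    simp only [Matrix.mulVec, dotProduct, Pi.smul_apply, smul_eq_mul]
    rw [hsum]
    · have hadj : ∀ a b : Fin (2*k), (antiRegular (2*k)).Adj a b ↔
          ((a < b ∧ (b:ℕ) % 2 = 1) ∨ (b < a ∧ (a:ℕ) % 2 = 1)) := by
        intro a b
        simp [antiRegular, thresholdGraph, Nat.mul_mod_right]
      simp only [if_pos rfl, if_neg hne.symm, if_neg hne, if_pos rfl, mul_one, mul_neg_one]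
      by_cases hj0 : j = v0
      · subst hj0
        have h01 : (antiRegular (2*k)).Adj v0 v1 := by
          rw [hadj]; left; exact ⟨by simp [hv0, hv1, Fin.lt_def], by simp [hv1]⟩
        simp [adjMat, h01, hne]
      · by_cases hj1 : j = v1
        · subst hj1
          have h10 : (antiRegular (2*k)).Adj v1 v0 := by
            rw [hadj]; right; exact ⟨by simp [hv0, hv1, Fin.lt_def], by simp [hv1]⟩
          simp [adjMat, h10, hne.symm]
        · have hj2 : 2 ≤ (j:ℕ) := by
            rcases Nat.lt_or_ge (j:ℕ) 2 with h | h
            · interval_cases hji : (j:ℕ)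
              · exact absurd (Fin.ext hji) hj0
              · exact absurd (Fin.ext hji) hj1
            · exact h
          have heq : (antiRegular (2*k)).Adj j v0 ↔ (antiRegular (2*k)).Adj j v1 := by
            rw [hadj, hadj]
            simp only [hv0, hv1, Fin.lt_def]
            constructor <;> intro h <;> rcases h with ⟨h, h'⟩ | ⟨h, h'⟩ <;> simp_all <;> omega
          simp only [adjMat, Matrix.of_apply]
          rw [if_neg hj0, if_neg hj1]
          by_cases ha : (antiRegular (2*k)).Adj j v0
          · rw [if_pos ha, if_pos (heq.mp ha)]; simp [hj0, hj1]
          · rw [if_neg ha, if_neg (fun h => ha (heq.mpr h))]; simp [hj0, hj1]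
    · intro i hi0 hi1
      rw [if_neg hi0, if_neg hi1, mul_zero]
end
end

section
/- No threshold graph has an adjacency eigenvalue in the interval [(-1-√2)/2, (-1+√2)/2] other than possibly -1 and/or 0. -/
open scoped Classical

noncomputable section

private def Pp {n : ℕ} (x : Fin n → ℝ) (j : ℕ) : ℝ :=
  ∑ i : Fin n, if (i:ℕ) < j then x i else 0

private def Rr {n : ℕ} (b : Fin n → Bool) (x : Fin n → ℝ) (j : ℕ) : ℝ :=
  ∑ i : Fin n, if j ≤ (i:ℕ) ∧ b i = true then x i else 0

private lemma Pp_zero {n : ℕ} (x : Fin n → ℝ) : Pp x 0 = 0 :=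
  Finset.sum_eq_zero fun i _ => if_neg (by omega)

private lemma Rr_top {n : ℕ} (b : Fin n → Bool) (x : Fin n → ℝ) : Rr b x n = 0 :=
  Finset.sum_eq_zero fun i _ => if_neg (fun h => absurd h.1 (by have := i.isLt; omega))

private lemma Pp_step {n : ℕ} (x : Fin n → ℝ) (j : ℕ) (hj : j < n) :
    Pp x (j+1) = Pp x j + x ⟨j, hj⟩ := by
  have hsplit : ∀ i : Fin n, (if (i:ℕ) < j+1 then x i else 0)
      = (if (i:ℕ) < j then x i else 0) + (if (i:ℕ) = j then x i else 0) := by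
    intro i
    by_cases h1 : (i:ℕ) < j
    · rw [if_pos (by omega), if_pos h1, if_neg (by omega), add_zero]
    · by_cases h2 : (i:ℕ) = j
      · rw [if_pos (by omega), if_neg h1, if_pos h2, zero_add]
      · rw [if_neg (by omega), if_neg h1, if_neg h2, add_zero]
  have hsingle : (∑ i : Fin n, if (i:ℕ) = j then x i else 0) = x ⟨j, hj⟩ := by
    rw [Finset.sum_eq_single (⟨j, hj⟩ : Fin n)]
    · rw [if_pos rfl]
    · intro i _ hne; exact if_neg (fun h => hne (Fin.ext h))
    · intro h; exact absurd (Finset.mem_univ _) h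
  calc Pp x (j+1)
      = ∑ i : Fin n, ((if (i:ℕ) < j then x i else 0) + (if (i:ℕ) = j then x i else 0)) :=
        Finset.sum_congr rfl (fun i _ => hsplit i)
    _ = Pp x j + x ⟨j, hj⟩ := by rw [Finset.sum_add_distrib, hsingle]; rfl

private lemma Rr_step {n : ℕ} (b : Fin n → Bool) (x : Fin n → ℝ) (j : ℕ) (hj : j < n) :
    Rr b x j = Rr b x (j+1) + (if b ⟨j, hj⟩ = true then x ⟨j, hj⟩ else 0) := by
  have hsplit : ∀ i : Fin n, (if j ≤ (i:ℕ) ∧ b i = true then x i else 0)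
      = (if j+1 ≤ (i:ℕ) ∧ b i = true then x i else 0)
        + (if (i:ℕ) = j ∧ b i = true then x i else 0) := by
    intro i
    by_cases hb : b i = true
    · by_cases h1 : j+1 ≤ (i:ℕ)
      · rw [if_pos ⟨by omega, hb⟩, if_pos ⟨h1, hb⟩, if_neg (by omega), add_zero]
      · by_cases h2 : (i:ℕ) = j
        · rw [if_pos ⟨by omega, hb⟩, if_neg (by omega), if_pos ⟨h2, hb⟩, zero_add]
        · rw [if_neg (by omega), if_neg (by omega), if_neg (by omega), add_zero]
    · rw [if_neg (by tauto), if_neg (by tauto), if_neg (by tauto), add_zero]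
  have hsingle : (∑ i : Fin n, if (i:ℕ) = j ∧ b i = true then x i else 0)
      = (if b ⟨j, hj⟩ = true then x ⟨j, hj⟩ else 0) := by
    rw [Finset.sum_eq_single (⟨j, hj⟩ : Fin n)]
    · by_cases hb : b (⟨j, hj⟩ : Fin n) = true
      · rw [if_pos ⟨rfl, hb⟩, if_pos hb]
      · rw [if_neg (by tauto), if_neg hb]
    · intro i _ hne; exact if_neg (fun h => hne (Fin.ext h.1))
    · intro h; exact absurd (Finset.mem_univ _) h
  calc Rr b x j
      = ∑ i : Fin n, ((if j+1 ≤ (i:ℕ) ∧ b i = true then x i else 0)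
          + (if (i:ℕ) = j ∧ b i = true then x i else 0)) :=
        Finset.sum_congr rfl (fun i _ => hsplit i)
    _ = _ := by rw [Finset.sum_add_distrib, hsingle]; rfl

private lemma Rr_split {n : ℕ} (b : Fin n → Bool) (x : Fin n → ℝ) (j : ℕ) :
    Rr b x 0 = Rr b x j + ∑ i : Fin n, (if (i:ℕ) < j ∧ b i = true then x i else 0) := by
  unfold Rr
  rw [← Finset.sum_add_distrib]
  apply Finset.sum_congr rfl
  intro i _
  by_cases hb : b i = true
  · by_cases h1 : j ≤ (i:ℕ)
    · rw [if_pos ⟨by omega, hb⟩, if_pos ⟨h1, hb⟩, if_neg (by omega), add_zero]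
    · rw [if_pos ⟨by omega, hb⟩, if_neg (by omega), if_pos ⟨by omega, hb⟩, zero_add]
  · rw [if_neg (by tauto), if_neg (by tauto), if_neg (by tauto), add_zero]

private lemma eigen_eq {n : ℕ} (b : Fin n → Bool) (x : Fin n → ℝ) (μ : ℝ)
    (hxe : (adjMat (thresholdGraph b)).mulVec x = μ • x) (v : Fin n) :
    μ * x v = (if b v = true then Pp x (v:ℕ) else 0) + Rr b x ((v:ℕ)+1) := by
  have hv := congrFun hxe v
  rw [Pi.smul_apply, smul_eq_mul] at hv
  rw [← hv]
  have hterm : ∀ i : Fin n, adjMat (thresholdGraph b) v i * x i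
      = (if (i:ℕ) < (v:ℕ) ∧ b v = true then x i else 0)
        + (if (v:ℕ)+1 ≤ (i:ℕ) ∧ b i = true then x i else 0) := by
    intro i
    have hadj : adjMat (thresholdGraph b) v i
        = if ((v < i ∧ b i = true) ∨ (i < v ∧ b v = true)) then 1 else 0 := by
      by_cases h : ((v < i ∧ b i = true) ∨ (i < v ∧ b v = true)) <;>
        simp [adjMat, Matrix.of_apply, thresholdGraph, h]
    rw [hadj]
    by_cases h1 : (v < i ∧ b i = true)
    · have hvi : (v:ℕ) < (i:ℕ) := h1.1
      rw [if_pos (Or.inl h1), if_neg (by omega), if_pos ⟨by omega, h1.2⟩, one_mul, zero_add]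
    · by_cases h2 : (i < v ∧ b v = true)
      · have hiv : (i:ℕ) < (v:ℕ) := h2.1
        rw [if_pos (Or.inr h2), if_pos ⟨hiv, h2.2⟩, if_neg (by omega), one_mul, add_zero]
      · rw [if_neg (by tauto), zero_mul, if_neg (fun h => h2 ⟨h.1, h.2⟩), if_neg (fun h => h1 ⟨by
          have := h.1; exact (by omega : (v:ℕ) < (i:ℕ)), h.2⟩), add_zero]
  have hsum : (adjMat (thresholdGraph b)).mulVec x v = ∑ i : Fin n,
      ((if (i:ℕ) < (v:ℕ) ∧ b v = true then x i else 0)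
        + (if (v:ℕ)+1 ≤ (i:ℕ) ∧ b i = true then x i else 0)) := by
    rw [Matrix.mulVec, dotProduct]
    exact Finset.sum_congr rfl fun i _ => hterm i
  rw [hsum, Finset.sum_add_distrib]
  congr 1
  by_cases hb : b v = true
  · rw [if_pos hb]
    exact Finset.sum_congr rfl fun i _ => by
      by_cases h : (i:ℕ) < (v:ℕ)
      · rw [if_pos ⟨h, hb⟩, if_pos h]
      · rw [if_neg (by tauto), if_neg h]
  · rw [if_neg hb]
    exact Finset.sum_eq_zero fun i _ => if_neg (by tauto)

private lemma sq_zero_of_nonpos {a : ℝ} (h : a^2 ≤ 0) : a = 0 := by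
  by_contra h0
  have : 0 < a^2 := by positivity
  linarith

private lemma keyA {μ W R : ℝ} (hm : 4*μ^2 + 4*μ ≤ 1) (hR : R ≠ 0)
    (hA : R^2 ≤ 2*μ*W*R) : 2*(μ+1)*R*W ≤ W^2 := by
  have hR2 : 0 < R^2 := by positivity
  have h1 : 0 < μ*W*R := by nlinarith
  have h2 : 0 ≤ (W^2 - 2*(μ+1)*R*W) * (μ*W*R) := by
    nlinarith [mul_le_mul_of_nonneg_left hA (sq_nonneg W),
      mul_nonneg (by linarith : (0:ℝ) ≤ 1 - (4*μ^2 + 4*μ)) (sq_nonneg (W*R))]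
  nlinarith [h1, h2]

private lemma keyB {μ W R : ℝ} (hm : 4*μ^2 + 4*μ ≤ 1) (hW : W ≠ 0)
    (hB : 2*(μ+1)*R*W ≤ -W^2) : 0 ≤ 2*μ*W*R + R^2 := by
  have hW2 : 0 < W^2 := by positivity
  have h1 : 0 < -((μ+1)*R*W) := by nlinarith
  have h2 : 0 ≤ (2*μ*W*R + R^2) * (-((μ+1)*R*W)) := by
    nlinarith [mul_le_mul_of_nonneg_left hB (sq_nonneg R),
      mul_nonneg (by linarith : (0:ℝ) ≤ 1 - (4*μ^2 + 4*μ)) (sq_nonneg (W*R))]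
  nlinarith [h1, h2]

private lemma x_all_zero {n : ℕ} (b : Fin n → Bool) (x : Fin n → ℝ) (μ : ℝ)
    (hμ0 : μ ≠ 0) (hμ1 : μ + 1 ≠ 0)
    (hxe : (adjMat (thresholdGraph b)).mulVec x = μ • x) (hR0 : Rr b x 0 = 0) : x = 0 := by
  have claim : ∀ j, ∀ v : Fin n, (v:ℕ) < j → x v = 0 := by
    intro j
    induction j with
    | zero => exact fun v h => absurd h (by omega)
    | succ j ih =>
      intro v hv
      by_cases hvj : (v:ℕ) < j
      · exact ih v hvj
      have hvj' : (v:ℕ) = j := by omega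
      have hPv : Pp x (v:ℕ) = 0 := Finset.sum_eq_zero fun i _ => by
        by_cases h : (i:ℕ) < (v:ℕ)
        · rw [if_pos h, ih i (by omega)]
        · rw [if_neg h]
      have hsum2 : (∑ i : Fin n, if (i:ℕ) < (v:ℕ)+1 ∧ b i = true then x i else 0)
          = (if b v = true then x v else 0) := by
        rw [Finset.sum_eq_single v]
        · by_cases hb : b v = true
          · rw [if_pos ⟨by omega, hb⟩, if_pos hb]
          · rw [if_neg (by tauto), if_neg hb]
        · intro i _ hne
          by_cases h : ((i:ℕ) < (v:ℕ)+1 ∧ b i = true)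
          · rw [if_pos h]
            have hiv : (i:ℕ) ≠ (v:ℕ) := fun hh => hne (Fin.ext hh)
            exact ih i (by have := h.1; omega)
          · rw [if_neg h]
        · intro h; exact absurd (Finset.mem_univ _) h
      have hsplit := Rr_split b x ((v:ℕ)+1)
      rw [hR0, hsum2] at hsplit
      have heq := eigen_eq b x μ hxe v
      by_cases hb : b v = true
      · rw [if_pos hb, hPv] at heq
        rw [if_pos hb] at hsplit
        have hz : (μ+1) * x v = 0 := by linear_combination heq - hsplit
        rcases mul_eq_zero.mp hz with h3 | h3
        · exact absurd h3 hμ1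
        · exact h3
      · rw [if_neg hb] at heq
        rw [if_neg hb] at hsplit
        have hz : μ * x v = 0 := by linear_combination heq - hsplit
        rcases mul_eq_zero.mp hz with h3 | h3
        · exact absurd h3 hμ0
        · exact h3
  funext v
  exact claim n v v.isLt


set_option maxHeartbeats 1600000 in
theorem threshold_omega_free_interval {n : ℕ} (b : Fin n → Bool)
    (h0 : ∀ h : 0 < n, b ⟨0, h⟩ = false) (μ : ℝ)
    (hμ : IsEigenvalue (adjMat (thresholdGraph b)) μ)
    (hmem : μ ∈ Set.Icc ((-1 - Real.sqrt 2) / 2) ((-1 + Real.sqrt 2) / 2)) :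
    μ = -1 ∨ μ = 0 := by
  by_contra hcon
  push_neg at hcon
  obtain ⟨hμ1, hμ0⟩ := hcon
  have hμ1' : μ + 1 ≠ 0 := fun h => hμ1 (by linarith)
  obtain ⟨x, hx0, hxe⟩ := hμ
  obtain ⟨hlo, hhi⟩ := hmem
  have hs2 : Real.sqrt 2 ^ 2 = 2 := Real.sq_sqrt (by norm_num)
  have hs2' : Real.sqrt 2 ≤ 2 := by nlinarith [Real.sqrt_nonneg 2]
  have hub : μ ≤ 1/2 := by
    have : (-1 + Real.sqrt 2) / 2 ≤ 1/2 := by linarith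
    linarith
  have hlb : -(3/2) ≤ μ := by
    have : -(3/2) ≤ (-1 - Real.sqrt 2) / 2 := by linarith
    linarith
  have hm : 4*μ^2 + 4*μ ≤ 1 := by
    have h1 : (0:ℝ) ≤ Real.sqrt 2 - (2*μ+1) := by linarith
    have h2 : (0:ℝ) ≤ (2*μ+1) + Real.sqrt 2 := by linarith
    nlinarith [mul_nonneg h1 h2]
  rcases Nat.eq_zero_or_pos n with hn0 | hn
  · exact hx0 (funext fun v => absurd v.isLt (by omega))
  have hb0 : b ⟨0, hn⟩ = false := h0 hn
  have hR0ne : Rr b x 0 ≠ 0 := fun h => hx0 (x_all_zero b x μ hμ0 hμ1' hxe h)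
  have main : ∀ j, 1 ≤ j → j ≤ n →
      ((Rr b x j ≠ 0 ∧ (Rr b x j ^ 2 ≤ 2*μ*(Pp x j + Rr b x j)*(Rr b x j) ∨
          μ*(Pp x j + Rr b x j) = (μ+1)*(Rr b x j))) ∨
        ((Pp x j + Rr b x j) ≠ 0 ∧
          2*(μ+1)*(Rr b x j)*(Pp x j + Rr b x j) ≤ -((Pp x j + Rr b x j)^2))) := by
    intro j hj1
    induction j, hj1 using Nat.le_induction with
    | base =>
      intro h1n
      have heq0 : μ * x ⟨0, hn⟩ = (if b ⟨0, hn⟩ = true then Pp x 0 else 0) + Rr b x 1 :=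
        eigen_eq b x μ hxe ⟨0, hn⟩
      rw [if_neg (by simp [hb0]), zero_add] at heq0
      have hRs0 := Rr_step b x 0 hn
      rw [if_neg (by simp [hb0]), add_zero] at hRs0
      have hP10 := Pp_step x 0 hn
      have hP00 := Pp_zero x
      left
      constructor
      · intro h; exact hR0ne (by rw [hRs0, h])
      · right
        linear_combination heq0 + μ * hP10 + μ * hP00
    | succ j hj ih =>
      intro hjn
      have hj' : j < n := by omega
      have inv := ih (by omega)
      have hP1 : Pp x (j+1) = Pp x j + x ⟨j, hj'⟩ := Pp_step x j hj'
      have hRs : Rr b x j = Rr b x (j+1) + (if b ⟨j, hj'⟩ = true then x ⟨j, hj'⟩ else 0) :=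
        Rr_step b x j hj'
      have heq : μ * x ⟨j, hj'⟩ = (if b ⟨j, hj'⟩ = true then Pp x j else 0) + Rr b x (j+1) :=
        eigen_eq b x μ hxe ⟨j, hj'⟩
      cases hbv : b ⟨j, hj'⟩ with
      | false =>
        rw [if_neg (by simp [hbv]), add_zero] at hRs
        rw [if_neg (by simp [hbv]), zero_add, ← hRs] at heq
        rw [hP1, ← hRs]
        have hxvR : μ * x ⟨j, hj'⟩ * Rr b x j = Rr b x j * Rr b x j := by
          linear_combination (Rr b x j) * heq
        rcases inv with ⟨hRne, hA | hEq⟩ | ⟨hWne, hB⟩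
        · left
          refine ⟨hRne, Or.inl ?_⟩
          nlinarith [hA, hxvR, sq_nonneg (Rr b x j)]
        · left
          refine ⟨hRne, Or.inl ?_⟩
          have e1 : μ*(Pp x j + Rr b x j)*(Rr b x j) = (μ+1)*(Rr b x j)*(Rr b x j) := by
            linear_combination (Rr b x j) * hEq
          nlinarith [e1, hxvR, mul_nonneg (by linarith : (0:ℝ) ≤ 2*μ+3) (sq_nonneg (Rr b x j))]
        · left
          have hW2 : 0 < (Pp x j + Rr b x j)^2 :=
            lt_of_le_of_ne (sq_nonneg _) (Ne.symm (pow_ne_zero 2 hWne))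
          have hRne : Rr b x j ≠ 0 := by
            intro h
            have h0' : 2*(μ+1)*(Rr b x j)*(Pp x j + Rr b x j) = 0 := by rw [h]; ring
            nlinarith [hB, hW2, h0']
          refine ⟨hRne, Or.inl ?_⟩
          have kb := keyB hm hWne hB
          nlinarith [kb, hxvR]
      | true =>
        rw [if_pos hbv] at hRs
        rw [if_pos hbv] at heq
        have hxv : (μ+1) * x ⟨j, hj'⟩ = Pp x j + Rr b x j := by
          linear_combination heq - hRs
        have hR1 : Rr b x (j+1) = Rr b x j - x ⟨j, hj'⟩ := by linarith [hRs]
        rw [hP1, hR1]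
        have e2 : (μ+1) * x ⟨j, hj'⟩ * (Pp x j + Rr b x j)
            = (Pp x j + Rr b x j) * (Pp x j + Rr b x j) := by
          linear_combination (Pp x j + Rr b x j) * hxv
        rcases inv with ⟨hRne, hA | hEq⟩ | ⟨hWne, hB⟩
        · have hWne : Pp x j + Rr b x j ≠ 0 := by
            intro h
            apply hRne
            apply sq_zero_of_nonpos
            have hz : 2*μ*(Pp x j + Rr b x j)*(Rr b x j) = 0 := by rw [h]; ring
            linarith [hA, hz]
          right
          constructor
          · intro h; apply hWne; linarith
          · have key := keyA hm hRne hA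
            nlinarith [key, e2]
        · have hWne : Pp x j + Rr b x j ≠ 0 := by
            intro h
            apply hRne
            have h2 : (μ+1) * Rr b x j = 0 := by rw [← hEq, h, mul_zero]
            rcases mul_eq_zero.mp h2 with h3 | h3
            · exact absurd h3 hμ1'
            · exact h3
          right
          constructor
          · intro h; apply hWne; linarith
          · have e1 : μ*(Pp x j + Rr b x j)*(Pp x j + Rr b x j)
                = (μ+1)*(Rr b x j)*(Pp x j + Rr b x j) := by
              linear_combination (Pp x j + Rr b x j) * hEq
            nlinarith [e1, e2,
              mul_nonneg (by linarith : (0:ℝ) ≤ 1 - 2*μ) (sq_nonneg (Pp x j + Rr b x j))]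
        · right
          constructor
          · intro h; apply hWne; linarith
          · nlinarith [hB, e2, sq_nonneg (Pp x j + Rr b x j)]
  have invn := main n hn le_rfl
  have hRn : Rr b x n = 0 := Rr_top b x
  rcases invn with ⟨hne, -⟩ | ⟨hWne, hB⟩
  · exact hne hRn
  · rw [hRn] at hB hWne
    have hW2 : 0 < (Pp x n + 0)^2 :=
      lt_of_le_of_ne (sq_nonneg _) (Ne.symm (pow_ne_zero 2 hWne))
    nlinarith [hB, hW2]
end
end
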